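/- arXiv:1504.05252 — 5 statements merged into one kernel-verified Lean document; each statement's English description precedes it below -/
import Mathlib

section
/- Let G be a graph consisting of a cycle with edges e₁, e₂, …, eₙ (in cyclic order) together with one additional pendant edge f incident exactly to the vertex of the cycle shared by e₁ and eₙ. Suppose each edge of G is assigned a list of colours of size at least 2, and the list of e₁ has size at least 3. Then G has a proper edge colouring in which every edge receives a colour from its list. -/
/-- A proper edge colouring of `G` from the lists `L`: every edge of `G` receives a colour
from its list, and edges sharing a vertex receive distinct colours. -/
def IsListEdgeColoring {V : Type*} (G : SimpleGraph V) (L : Sym2 V → Finset ℕ)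
    (C : Sym2 V → ℕ) : Prop :=
  (∀ e ∈ G.edgeSet, C e ∈ L e) ∧
  ∀ e ∈ G.edgeSet, ∀ f ∈ G.edgeSet, e ≠ f → (∃ v, v ∈ e ∧ v ∈ f) → C e ≠ C f

/-- The graph consisting of a cycle on `ZMod n` (vertices `Sum.inl i`, edges between `i`
and `i+1`) plus a pendant edge `f` from an extra vertex `Sum.inr ()` to the vertex `0`,
the common endpoint of the edges `e₁ = s(0,1)` and `eₙ = s(n-1,0)`. -/
def cyclePendant (n : ℕ) : SimpleGraph (ZMod n ⊕ Unit) :=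
  SimpleGraph.fromRel (fun a b =>
    match a, b with
    | Sum.inl i, Sum.inl j => j = i + 1
    | Sum.inl i, Sum.inr _ => i = 0
    | _, _ => False)

/-! ### Auxiliary material -/

/-- Greedy chain of colours: `cpChain ℓ y 0 = y`, and `cpChain ℓ y (k+1)` is some element of
`ℓ (k+1)` different from `cpChain ℓ y k` (when such an element exists). -/
noncomputable def cpChain (ℓ : ℕ → Finset ℕ) (y : ℕ) : ℕ → ℕ
  | 0 => y
  | k + 1 =>
    if h : ((ℓ (k + 1)).erase (cpChain ℓ y k)).Nonempty then h.choose else 0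

lemma cpChain_succ_mem (ℓ : ℕ → Finset ℕ) (y : ℕ)
    (hcard : ∀ k, 2 ≤ (ℓ k).card) (k : ℕ) :
    cpChain ℓ y (k + 1) ∈ (ℓ (k + 1)).erase (cpChain ℓ y k) := by
  have h : ((ℓ (k + 1)).erase (cpChain ℓ y k)).Nonempty := by
    apply Finset.card_pos.mp
    have h1 := Finset.pred_card_le_card_erase (s := ℓ (k + 1)) (a := cpChain ℓ y k)
    have h2 := hcard (k + 1)
    omega
  rw [cpChain, dif_pos h]
  exact h.choose_spec

lemma cpChain_mem (ℓ : ℕ → Finset ℕ) (y : ℕ)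
    (hcard : ∀ k, 2 ≤ (ℓ k).card) (hy : y ∈ ℓ 0) (k : ℕ) :
    cpChain ℓ y k ∈ ℓ k := by
  cases k with
  | zero => exact hy
  | succ k => exact Finset.mem_of_mem_erase (cpChain_succ_mem ℓ y hcard k)

lemma cpChain_ne (ℓ : ℕ → Finset ℕ) (y : ℕ)
    (hcard : ∀ k, 2 ≤ (ℓ k).card) (k : ℕ) :
    cpChain ℓ y (k + 1) ≠ cpChain ℓ y k :=
  Finset.ne_of_mem_erase (cpChain_succ_mem ℓ y hcard k)

/-- The combinatorial selection lemma: given lists `F` (for the pendant edge), `l0`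
(for `e₁`) and `l1` (for `e₂`), and a function `Q` giving the colour of `eₙ` obtained by the
greedy chain started at a colour `y` of `e₂`, we can choose consistent colours. -/
lemma cpSelection (F l0 l1 : Finset ℕ) (Q : ℕ → ℕ)
    (hF : 2 ≤ F.card) (h0 : 3 ≤ l0.card) (h1 : 2 ≤ l1.card) :
    ∃ y ∈ l1, ∃ cf ∈ F, ∃ c1 ∈ l0, cf ≠ Q y ∧ c1 ≠ cf ∧ c1 ≠ Q y ∧ c1 ≠ y := by
  by_contra hcon
  push_neg at hcon
  -- main consequence: the list of `e₁` is exactly the triple of forbidden colours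
  have main : ∀ y ∈ l1, ∀ cf ∈ F, cf ≠ Q y → l0 = {cf, Q y, y} := by
    intro y hy cf hcf hne
    apply Finset.eq_of_subset_of_card_le
    · intro x hx
      simp only [Finset.mem_insert, Finset.mem_singleton]
      by_cases hxc : x = cf
      · exact Or.inl hxc
      by_cases hxq : x = Q y
      · exact Or.inr (Or.inl hxq)
      exact Or.inr (Or.inr (hcon y hy cf hcf x hx hne hxc hxq))
    · refine le_trans ?_ h0
      refine le_trans (Finset.card_insert_le _ _) ?_
      have := Finset.card_insert_le (Q y) ({y} : Finset ℕ)
      simp only [Finset.card_singleton] at this ⊢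
      omega
  -- a triple equal to `l0` consists of pairwise distinct elements
  have hc3 : ∀ a b c : ℕ, l0 = {a, b, c} → a ≠ b ∧ a ≠ c ∧ b ≠ c := by
    intro a b c h
    have hcard : 3 ≤ ({a, b, c} : Finset ℕ).card := h ▸ h0
    refine ⟨?_, ?_, ?_⟩ <;> rintro rfl
    · have hsub : ({a, a, c} : Finset ℕ) ⊆ {a, c} := by
        intro z hz; simp only [Finset.mem_insert, Finset.mem_singleton] at hz ⊢; tauto
      have := Finset.card_le_card hsub
      have h2 : ({a, c} : Finset ℕ).card ≤ 2 := by
        refine le_trans (Finset.card_insert_le _ _) ?_; simp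
      omega
    · have hsub : ({a, b, a} : Finset ℕ) ⊆ {a, b} := by
        intro z hz; simp only [Finset.mem_insert, Finset.mem_singleton] at hz ⊢; tauto
      have := Finset.card_le_card hsub
      have h2 : ({a, b} : Finset ℕ).card ≤ 2 := by
        refine le_trans (Finset.card_insert_le _ _) ?_; simp
      omega
    · have hsub : ({a, b, b} : Finset ℕ) ⊆ {a, b} := by
        intro z hz; simp only [Finset.mem_insert, Finset.mem_singleton] at hz ⊢; tauto
      have := Finset.card_le_card hsub
      have h2 : ({a, b} : Finset ℕ).card ≤ 2 := by
        refine le_trans (Finset.card_insert_le _ _) ?_; simp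
      omega
  -- `Q y` must belong to `F`
  have QmemF : ∀ y ∈ l1, Q y ∈ F := by
    intro y hy
    by_contra hq
    obtain ⟨u, hu, v, hv, huv⟩ := Finset.one_lt_card.mp (by omega : 1 < F.card)
    have e1 := main y hy u hu (fun h => hq (h ▸ hu))
    have e2 := main y hy v hv (fun h => hq (h ▸ hv))
    have hmem : u ∈ ({v, Q y, y} : Finset ℕ) := by
      rw [← e2, e1]; simp
    obtain ⟨d1, d2, d3⟩ := hc3 u (Q y) y e1
    simp only [Finset.mem_insert, Finset.mem_singleton] at hmem
    rcases hmem with h | h | h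
    exacts [huv h, d1 h, d2 h]
  obtain ⟨y, hy, y', hy', hyy'⟩ := Finset.one_lt_card.mp (by omega : 1 < l1.card)
  obtain ⟨cf, hcf, hcfq⟩ := Finset.exists_mem_ne (by omega : 1 < F.card) (Q y)
  obtain ⟨cf', hcf', hcfq'⟩ := Finset.exists_mem_ne (by omega : 1 < F.card) (Q y')
  have e1 := main y hy cf hcf hcfq
  have e2 := main y' hy' cf' hcf' hcfq'
  obtain ⟨d1, d2, d3⟩ := hc3 cf (Q y) y e1
  -- `y ∉ F` (not needed for `y`, we only need it conceptually; we use `y' ∈ l0`)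
  have hy'mem : y' ∈ l0 := by rw [e2]; simp
  rw [e1] at hy'mem
  simp only [Finset.mem_insert, Finset.mem_singleton] at hy'mem
  have hy'F : y' ∉ F := by
    intro hyF
    obtain ⟨d1', d2', d3'⟩ := hc3 cf' (Q y') y' e2
    by_cases h : y' = Q y'
    · exact d3' h.symm
    · have := main y' hy' y' hyF h
      obtain ⟨dd1, dd2, dd3⟩ := hc3 y' (Q y') y' this
      exact dd2 rfl
  rcases hy'mem with h | h | h
  · exact hy'F (h ▸ hcf)
  · exact hy'F (h ▸ QmemF y hy)
  · exact hyy' h.symm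

/-- Auxiliary symmetric function used to define the edge colouring. -/
def cpFun (n : ℕ) (g : ZMod n → ℕ) (cf : ℕ) : ZMod n ⊕ Unit → ZMod n ⊕ Unit → ℕ
  | Sum.inl i, Sum.inl j => if j = i + 1 then g i else if i = j + 1 then g j else 0
  | Sum.inl _, Sum.inr _ => cf
  | Sum.inr _, Sum.inl _ => cf
  | Sum.inr _, Sum.inr _ => cf

lemma cpFun_symm (n : ℕ) (hn : 3 ≤ n) (g : ZMod n → ℕ) (cf : ℕ) (a b : ZMod n ⊕ Unit) :
    cpFun n g cf a b = cpFun n g cf b a := by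
  have h2 : (2 : ZMod n) ≠ 0 := by
    intro h
    have : ((2 : ℕ) : ZMod n) = 0 := by push_cast; exact h
    have := (ZMod.natCast_eq_zero_iff 2 n).mp this
    have := Nat.le_of_dvd (by norm_num) this
    omega
  match a, b with
  | Sum.inl i, Sum.inl j =>
    simp only [cpFun]
    by_cases hji : j = i + 1
    · by_cases hij : i = j + 1
      · exfalso
        apply h2
        rw [hji] at hij
        linear_combination -hij
      · rw [if_pos hji, if_neg hij, if_pos hji]
    · by_cases hij : i = j + 1
      · rw [if_neg hji, if_pos hij, if_pos hij]
      · rw [if_neg hji, if_neg hij, if_neg hij, if_neg hji]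
  | Sum.inl _, Sum.inr _ => rfl
  | Sum.inr _, Sum.inl _ => rfl
  | Sum.inr _, Sum.inr _ => rfl

theorem cycle_pendant_list_edge_colorable (n : ℕ) (hn : 3 ≤ n)
    (L : Sym2 (ZMod n ⊕ Unit) → Finset ℕ)
    (hL : ∀ e ∈ (cyclePendant n).edgeSet, 2 ≤ (L e).card)
    (hL1 : 3 ≤ (L s(Sum.inl 0, Sum.inl 1)).card) :
    ∃ C, IsListEdgeColoring (cyclePendant n) L C := by
  haveI : NeZero n := ⟨by omega⟩
  haveI : Fact (1 < n) := ⟨by omega⟩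
  have h10 : (1 : ZMod n) ≠ 0 := one_ne_zero
  have hself : ∀ i : ZMod n, i ≠ i + 1 := fun i h => h10 (left_eq_add.mp h)
  -- adjacency facts
  have cycAdj : ∀ i : ZMod n, (cyclePendant n).Adj (Sum.inl i) (Sum.inl (i + 1)) := by
    intro i
    rw [cyclePendant, SimpleGraph.fromRel_adj]
    exact ⟨by simpa using hself i, Or.inl rfl⟩
  have penAdj : (cyclePendant n).Adj (Sum.inl 0) (Sum.inr ()) := by
    rw [cyclePendant, SimpleGraph.fromRel_adj]
    exact ⟨by simp, Or.inl rfl⟩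
  have cycEdge : ∀ i : ZMod n, s(Sum.inl i, Sum.inl (i + 1)) ∈ (cyclePendant n).edgeSet :=
    fun i => (SimpleGraph.mem_edgeSet _).mpr (cycAdj i)
  have penEdge : s(Sum.inl (0 : ZMod n), Sum.inr ()) ∈ (cyclePendant n).edgeSet :=
    (SimpleGraph.mem_edgeSet _).mpr penAdj
  -- characterization of edges
  have edgeChar : ∀ e ∈ (cyclePendant n).edgeSet,
      (∃ i : ZMod n, e = s(Sum.inl i, Sum.inl (i + 1))) ∨
        e = s(Sum.inl (0 : ZMod n), Sum.inr ()) := by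
    intro e he
    induction e using Sym2.ind with
    | _ a b =>
      rw [SimpleGraph.mem_edgeSet, cyclePendant, SimpleGraph.fromRel_adj] at he
      obtain ⟨hab, h⟩ := he
      match a, b with
      | Sum.inl i, Sum.inl j =>
        rcases h with h | h
        · exact Or.inl ⟨i, by rw [h]⟩
        · exact Or.inl ⟨j, by rw [h, Sym2.eq_swap]⟩
      | Sum.inl i, Sum.inr u =>
        rcases h with h | h
        · cases u; exact Or.inr (by rw [h])
        · exact h.elim
      | Sum.inr u, Sum.inl i =>
        rcases h with h | h
        · exact h.elim
        · cases u; exact Or.inr (by rw [h, Sym2.eq_swap])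
      | Sum.inr u, Sum.inr v =>
        rcases h with h | h <;> exact h.elim
  -- the lists of the cycle edges, indexed so that `ℓ' k` is the list of `e_{k+2}`,
  -- i.e. of the edge `s(k+1, k+2)`
  set ℓ' : ℕ → Finset ℕ :=
    fun k => L s(Sum.inl ((k + 1 : ℕ) : ZMod n), Sum.inl (((k + 1 : ℕ) : ZMod n) + 1)) with hℓ'
  have hℓ'card : ∀ k, 2 ≤ (ℓ' k).card := fun k => hL _ (cycEdge _)
  -- the selection
  set Q : ℕ → ℕ := fun y => cpChain ℓ' y (n - 2) with hQ
  obtain ⟨y, hy, cf, hcf, c1, hc1, hcfQ, hc1cf, hc1Q, hc1y⟩ :=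
    cpSelection (L s(Sum.inl (0 : ZMod n), Sum.inr ())) (L s(Sum.inl 0, Sum.inl 1)) (ℓ' 0) Q
      (hL _ penEdge) hL1 (hℓ'card 0)
  set d : ℕ → ℕ := cpChain ℓ' y with hd
  -- the colouring of the cycle
  set g : ZMod n → ℕ := fun i => if i = 0 then c1 else d (i.val - 1) with hg
  have hcast : ∀ i : ZMod n, ((i.val : ℕ) : ZMod n) = i := fun i => ZMod.natCast_zmod_val i
  have hdmem : ∀ k, d k ∈ ℓ' k := cpChain_mem ℓ' y hℓ'card hy
  have hdne : ∀ k, d (k + 1) ≠ d k := cpChain_ne ℓ' y hℓ'card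
  have hval1 : (1 : ZMod n).val = 1 := ZMod.val_one n
  have hneg1 : ((-1 : ZMod n)).val = n - 1 := by
    have h1 : ((n - 1 : ℕ) : ZMod n) = -1 := by
      rw [Nat.cast_sub (by omega : 1 ≤ n), ZMod.natCast_self]
      push_cast
      ring
    rw [← h1, ZMod.val_natCast, Nat.mod_eq_of_lt (by omega)]
  have hg0 : g 0 = c1 := by simp [hg]
  have hg1 : g 1 = y := by
    have : (1 : ZMod n) ≠ 0 := h10
    simp only [hg, if_neg this, hval1]
    rfl
  have hgneg1 : g (-1) = Q y := by
    have hne : (-1 : ZMod n) ≠ 0 := by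
      intro h
      exact h10 (by rw [← neg_neg (1 : ZMod n), h, neg_zero])
    simp only [hg, if_neg hne, hneg1, hQ, hd]
    have harith : n - 1 - 1 = n - 2 := by omega
    rw [harith]
  -- membership of the colouring of the cycle
  have hgmem : ∀ i : ZMod n, g i ∈ L s(Sum.inl i, Sum.inl (i + 1)) := by
    intro i
    by_cases hi : i = 0
    · subst hi
      rw [hg0]
      simpa using hc1
    · have hvalpos : 1 ≤ i.val := by
        rcases Nat.eq_zero_or_pos i.val with h | h
        · exact absurd (by rw [← hcast i, h]; simp) hi
        · omega
      have harith : i.val - 1 + 1 = i.val := by omega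
      have hmm : d (i.val - 1) ∈ L s(Sum.inl ((i.val - 1 + 1 : ℕ) : ZMod n),
          Sum.inl (((i.val - 1 + 1 : ℕ) : ZMod n) + 1)) := hdmem _
      rw [harith, hcast i] at hmm
      simp only [hg, if_neg hi]
      exact hmm
  -- adjacent cycle edges get different colours
  have hgadj : ∀ i : ZMod n, g i ≠ g (i + 1) := by
    intro i
    by_cases hi : i = 0
    · subst hi
      rw [hg0, zero_add, hg1]
      exact hc1y
    · by_cases hi1 : i + 1 = 0
      · have : i = -1 := by
          have := hi1
          linear_combination (norm := ring_nf) this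
        subst this
        rw [hgneg1, neg_add_cancel, hg0]
        exact fun h => hc1Q (h.symm)
      · -- both `i ≠ 0` and `i+1 ≠ 0`
        have hvalpos : 1 ≤ i.val := by
          rcases Nat.eq_zero_or_pos i.val with h | h
          · exact absurd (by rw [← hcast i, h]; simp) hi
          · omega
        have hvallt : i.val < n - 1 := by
          have hlt : i.val < n := ZMod.val_lt i
          rcases Nat.lt_or_ge i.val (n - 1) with h | h
          · exact h
          · exfalso
            have : i.val = n - 1 := by omega
            have : i = -1 := by
              rw [← hcast i, this, Nat.cast_sub (by omega : 1 ≤ n), ZMod.natCast_self]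
              push_cast; ring
            rw [this, neg_add_cancel] at hi1
            exact hi1 rfl
        have hvalsucc : (i + 1).val = i.val + 1 := by
          have : (i + 1 : ZMod n) = ((i.val + 1 : ℕ) : ZMod n) := by
            push_cast [hcast i]
            ring
          rw [this, ZMod.val_natCast, Nat.mod_eq_of_lt (by omega)]
        rw [hg]
        simp only [if_neg hi, if_neg hi1, hvalsucc]
        have harith : i.val + 1 - 1 = (i.val - 1) + 1 := by omega
        rw [harith]
        exact (hdne (i.val - 1)).symm
  -- assemble the colouring
  refine ⟨Sym2.lift ⟨cpFun n g cf, fun a b => cpFun_symm n hn g cf a b⟩, ?_, ?_⟩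
  · -- membership
    intro e he
    rcases edgeChar e he with ⟨i, rfl⟩ | rfl
    · have : Sym2.lift ⟨cpFun n g cf, fun a b => cpFun_symm n hn g cf a b⟩
          s(Sum.inl i, Sum.inl (i + 1)) = g i := by
        simp [cpFun]
      rw [this]
      exact hgmem i
    · simpa [cpFun] using hcf
  · -- properness
    intro e he f hf hef ⟨v, hv1, hv2⟩
    have hCcyc : ∀ i : ZMod n,
        Sym2.lift ⟨cpFun n g cf, fun a b => cpFun_symm n hn g cf a b⟩
          s(Sum.inl i, Sum.inl (i + 1)) = g i := by
      intro i; simp [cpFun]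
    have hCpen : Sym2.lift ⟨cpFun n g cf, fun a b => cpFun_symm n hn g cf a b⟩
        s(Sum.inl (0 : ZMod n), Sum.inr ()) = cf := by
      simp [cpFun]
    rcases edgeChar e he with ⟨i, rfl⟩ | rfl <;> rcases edgeChar f hf with ⟨j, rfl⟩ | rfl
    · -- two cycle edges
      rw [hCcyc, hCcyc]
      rw [Sym2.mem_iff] at hv1 hv2
      have hij : i = j + 1 ∨ i + 1 = j := by
        rcases hv1 with h1 | h1 <;> rcases hv2 with h2 | h2
        · exfalso; apply hef
          rw [h1] at h2
          have : i = j := Sum.inl.inj h2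
          rw [this]
        · left
          rw [h1] at h2
          exact Sum.inl.inj h2
        · right
          rw [h1] at h2
          exact Sum.inl.inj h2
        · exfalso; apply hef
          rw [h1] at h2
          have : i + 1 = j + 1 := Sum.inl.inj h2
          have : i = j := by
            have := this
            linear_combination (norm := ring_nf) this
          rw [this]
      rcases hij with h | h
      · rw [h]; exact (hgadj j).symm
      · rw [← h]; exact hgadj i
    · -- cycle edge and pendant edge
      rw [hCcyc, hCpen]
      rw [Sym2.mem_iff] at hv1 hv2
      have : i = 0 ∨ i + 1 = 0 := by
        rcases hv1 with h1 | h1 <;> rcases hv2 with h2 | h2 <;>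
          rw [h1] at h2 <;> first
            | (left; exact Sum.inl.inj h2)
            | (right; exact Sum.inl.inj h2)
            | exact absurd h2 (by simp)
      rcases this with h | h
      · rw [h, hg0]
        exact fun hh => hc1cf hh
      · have : i = -1 := by linear_combination (norm := ring_nf) h
        rw [this, hgneg1]
        exact fun hh => hcfQ hh.symm
    · -- pendant edge and cycle edge
      rw [hCcyc, hCpen]
      rw [Sym2.mem_iff] at hv1 hv2
      have : j = 0 ∨ j + 1 = 0 := by
        rcases hv1 with h1 | h1 <;> rcases hv2 with h2 | h2 <;>
          rw [h2] at h1 <;> first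
            | (left; exact Sum.inl.inj h1)
            | (right; exact Sum.inl.inj h1)
            | exact absurd h1 (by simp)
      rcases this with h | h
      · rw [h, hg0]
        exact fun hh => hc1cf hh.symm
      · have : j = -1 := by linear_combination (norm := ring_nf) h
        rw [this, hgneg1]
        exact fun hh => hcfQ hh
    · exact absurd rfl hef
end

section
/- Let G be a graph with a list assignment L on its edges, and let v₁v₂ and w₁w₂ be two non-adjacent edges of G (sharing no endpoint). If |L(v₁v₂)|·|L(w₁w₂)| > Σ ⌊|L(vᵢwⱼ)|/2⌋·⌈|L(vᵢwⱼ)|/2⌉, where the sum ranges over all edges vᵢwⱼ ∈ E(G) with i,j ∈ {1,2}, then there exist colours c₁ ∈ L(v₁v₂) and c₂ ∈ L(w₁w₂) that are compatible. -/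
private lemma nat_amgm (a b : ℕ) : a * b ≤ (a + b) / 2 * ((a + b + 1) / 2) := by
  rcases Nat.even_or_odd (a + b) with ⟨k, hk⟩ | ⟨k, hk⟩
  · have h1 : (a + b) / 2 = k := by omega
    have h2 : (a + b + 1) / 2 = k := by omega
    rw [h1, h2]; zify; nlinarith [sq_nonneg ((a : ℤ) - b)]
  · have h1 : (a + b) / 2 = k := by omega
    have h2 : (a + b + 1) / 2 = k + 1 := by omega
    rw [h1, h2]
    have hd : (a : ℤ) - b ≠ 0 := by omega
    have h0 : (0 : ℤ) < ((a : ℤ) - b) ^ 2 := by positivity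
    have h3 : (0 : ℤ) + 1 ≤ ((a : ℤ) - b) ^ 2 := Int.add_one_le_iff.mpr h0
    zify; nlinarith [h3]

private lemma le_half_mul (a b s : ℕ) (h : a + b ≤ s) :
    a * b ≤ s / 2 * ((s + 1) / 2) := by
  have h1 : a * b ≤ a * (s - a) := Nat.mul_le_mul_left a (by omega)
  have h2 := nat_amgm a (s - a)
  rw [show a + (s - a) = s by omega] at h2
  exact le_trans h1 h2

theorem compatible_colours_exist {V : Type*} (G : SimpleGraph V) [DecidableRel G.Adj]
    (L : Sym2 V → Finset ℕ) (v₁ v₂ w₁ w₂ : V)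
    (hv : G.Adj v₁ v₂) (hw : G.Adj w₁ w₂)
    (hne : v₁ ≠ w₁ ∧ v₁ ≠ w₂ ∧ v₂ ≠ w₁ ∧ v₂ ≠ w₂)
    (hsum :
      (if G.Adj v₁ w₁ then (L s(v₁, w₁)).card / 2 * (((L s(v₁, w₁)).card + 1) / 2) else 0) +
      (if G.Adj v₁ w₂ then (L s(v₁, w₂)).card / 2 * (((L s(v₁, w₂)).card + 1) / 2) else 0) +
      (if G.Adj v₂ w₁ then (L s(v₂, w₁)).card / 2 * (((L s(v₂, w₁)).card + 1) / 2) else 0) +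
      (if G.Adj v₂ w₂ then (L s(v₂, w₂)).card / 2 * (((L s(v₂, w₂)).card + 1) / 2) else 0)
        < (L s(v₁, v₂)).card * (L s(w₁, w₂)).card) :
    ∃ c₁ ∈ L s(v₁, v₂), ∃ c₂ ∈ L s(w₁, w₂),
      c₁ = c₂ ∨
      ∀ x y, G.Adj x y →
        s(x, y) ≠ s(v₁, v₂) → (∃ u, u ∈ s(x, y) ∧ u ∈ s(v₁, v₂)) →
        s(x, y) ≠ s(w₁, w₂) → (∃ u, u ∈ s(x, y) ∧ u ∈ s(w₁, w₂)) →
        ¬(c₁ ∈ L s(x, y) ∧ c₂ ∈ L s(x, y)) := by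
  by_cases hcap : (L s(v₁, v₂) ∩ L s(w₁, w₂)).Nonempty
  · obtain ⟨c, hc⟩ := hcap
    rw [Finset.mem_inter] at hc
    exact ⟨c, hc.1, c, hc.2, Or.inl rfl⟩
  · rw [Finset.not_nonempty_iff_eq_empty] at hcap
    have hdisjEF : ∀ a, a ∈ L s(v₁, v₂) → a ∉ L s(w₁, w₂) := by
      intro a h1 h2
      have : a ∈ L s(v₁, v₂) ∩ L s(w₁, w₂) := Finset.mem_inter.mpr ⟨h1, h2⟩
      rw [hcap] at this
      exact absurd this (Finset.notMem_empty a)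
    set P : Sym2 V → Finset (ℕ × ℕ) :=
      fun g => (L g ∩ L s(v₁, v₂)) ×ˢ (L g ∩ L s(w₁, w₂)) with hP
    have hPcard : ∀ g, (P g).card ≤ (L g).card / 2 * (((L g).card + 1) / 2) := by
      intro g
      rw [hP]
      simp only
      rw [Finset.card_product]
      apply le_half_mul
      have hdisj : Disjoint (L g ∩ L s(v₁, v₂)) (L g ∩ L s(w₁, w₂)) := by
        rw [Finset.disjoint_left]
        intro a ha hb
        rw [Finset.mem_inter] at ha hb
        exact hdisjEF a ha.2 hb.2
      calc (L g ∩ L s(v₁, v₂)).card + (L g ∩ L s(w₁, w₂)).card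
          = ((L g ∩ L s(v₁, v₂)) ∪ (L g ∩ L s(w₁, w₂))).card :=
            (Finset.card_union_of_disjoint hdisj).symm
        _ ≤ (L g).card := Finset.card_le_card (by
            intro a ha
            rw [Finset.mem_union, Finset.mem_inter, Finset.mem_inter] at ha
            tauto)
    set T : Finset (ℕ × ℕ) :=
      (if G.Adj v₁ w₁ then P s(v₁, w₁) else ∅) ∪
      (if G.Adj v₁ w₂ then P s(v₁, w₂) else ∅) ∪
      (if G.Adj v₂ w₁ then P s(v₂, w₁) else ∅) ∪
      (if G.Adj v₂ w₂ then P s(v₂, w₂) else ∅) with hT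
    have hifcard : ∀ (c : Prop) [Decidable c] (g : Sym2 V),
        (if c then P g else ∅).card ≤
          (if c then (L g).card / 2 * (((L g).card + 1) / 2) else 0) := by
      intro c _ g
      split_ifs
      · exact hPcard g
      · simp
    have hTcard : T.card < (L s(v₁, v₂) ×ˢ L s(w₁, w₂)).card := by
      rw [Finset.card_product]
      refine lt_of_le_of_lt ?_ hsum
      calc T.card
          ≤ (if G.Adj v₁ w₁ then P s(v₁, w₁) else ∅).card +
            (if G.Adj v₁ w₂ then P s(v₁, w₂) else ∅).card +
            (if G.Adj v₂ w₁ then P s(v₂, w₁) else ∅).card +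
            (if G.Adj v₂ w₂ then P s(v₂, w₂) else ∅).card := by
            rw [hT]
            refine le_trans (Finset.card_union_le _ _) ?_
            refine Nat.add_le_add ?_ le_rfl
            refine le_trans (Finset.card_union_le _ _) ?_
            refine Nat.add_le_add ?_ le_rfl
            exact Finset.card_union_le _ _
        _ ≤ _ := by
            gcongr <;> apply hifcard
    obtain ⟨p, hpS, hpT⟩ : ∃ p ∈ L s(v₁, v₂) ×ˢ L s(w₁, w₂), p ∉ T := by
      by_contra h
      push_neg at h
      exact absurd (Finset.card_le_card h) (not_le.mpr hTcard)
    obtain ⟨c₁, c₂⟩ := p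
    rw [Finset.mem_product] at hpS
    obtain ⟨hc₁, hc₂⟩ := hpS
    refine ⟨c₁, hc₁, c₂, hc₂, Or.inr ?_⟩
    -- from hpT, extract the four non-membership facts
    rw [hT] at hpT
    simp only [Finset.mem_union, not_or] at hpT
    obtain ⟨⟨⟨h11, h12⟩, h21⟩, h22⟩ := hpT
    have key : ∀ (a b : V), G.Adj a b → (a = v₁ ∨ a = v₂) → (b = w₁ ∨ b = w₂) →
        ¬(c₁ ∈ L s(a, b) ∧ c₂ ∈ L s(a, b)) := by
      intro a b hab ha hb ⟨hg1, hg2⟩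
      have hmem : (c₁, c₂) ∈ P s(a, b) := by
        rw [hP]
        simp only [Finset.mem_product, Finset.mem_inter]
        exact ⟨⟨hg1, hc₁⟩, ⟨hg2, hc₂⟩⟩
      rcases ha with rfl | rfl <;> rcases hb with rfl | rfl
      · exact h11 (by rw [if_pos hab]; exact hmem)
      · exact h12 (by rw [if_pos hab]; exact hmem)
      · exact h21 (by rw [if_pos hab]; exact hmem)
      · exact h22 (by rw [if_pos hab]; exact hmem)
    rintro x y hxy hne1 ⟨u, hu1, hu2⟩ hne2 ⟨u', hu1', hu2'⟩
    rw [Sym2.mem_iff] at hu1 hu2 hu1' hu2'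
    have huu' : u ≠ u' := by
      rcases hu2 with rfl | rfl <;> rcases hu2' with rfl | rfl <;> tauto
    have hset : s(x, y) = s(u, u') := by
      rcases hu1 with rfl | rfl <;> rcases hu1' with rfl | rfl
      · exact absurd rfl huu'
      · rfl
      · exact Sym2.eq_swap
      · exact absurd rfl huu'
    have hadj : G.Adj u u' := by
      rw [← SimpleGraph.mem_edgeSet, ← hset]
      exact hxy
    rw [hset]
    exact key u u' hadj hu2 hu2'
end

section
/- Every 3-regular Halin graph has chromatic index 3, i.e., its edges can be properly coloured with 3 colours. -/
/-- A subset of `ZMod n` is a cyclic interval (a set of consecutive elements). -/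
def CyclicInterval (n : ℕ) (I : Set (ZMod n)) : Prop :=
  ∃ (s : ZMod n) (len : ℕ), I = {x | ∃ j : ℕ, j < len ∧ x = s + (j : ZMod n)}

/-- `G` is a Halin graph: it is the union of a tree `T` without degree-2 vertices and a
cycle `σ 0, σ 1, …, σ (n-1)` through precisely the leaves of `T`, where the cyclic order
of the leaves is compatible with a planar embedding of `T`:  for every edge `ab` of the
tree, the leaves lying in the component of `a` of `T - ab` form a set of consecutive
vertices of the cycle (this is exactly the condition for the resulting graph to be
planar, i.e. for the cycle to pass around the tree in the natural cyclic order). -/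
def IsHalin {V : Type*} (G : SimpleGraph V) : Prop :=
  ∃ (T : SimpleGraph V) (n : ℕ) (σ : ZMod n → V),
    T.IsTree ∧ T ≤ G ∧
    (∀ v : V, (T.neighborSet v).ncard ≠ 2) ∧
    3 ≤ n ∧ Function.Injective σ ∧
    Set.range σ = {v : V | (T.neighborSet v).ncard = 1} ∧
    (∀ u v : V, (G.Adj u v ∧ ¬T.Adj u v) ↔
      ∃ i : ZMod n, (u = σ i ∧ v = σ (i + 1)) ∨ (v = σ i ∧ u = σ (i + 1))) ∧
    (∀ a b : V, T.Adj a b →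
      CyclicInterval n {i : ZMod n | (T.deleteEdges {s(a, b)}).Reachable a (σ i)})

/-- A proper edge colouring of `G` with colours in `α`. -/
def IsProperEdgeColoring {V α : Type*} (G : SimpleGraph V) (C : Sym2 V → α) : Prop :=
  ∀ e ∈ G.edgeSet, ∀ f ∈ G.edgeSet, e ≠ f → (∃ v, v ∈ e ∧ v ∈ f) → C e ≠ C f

open SimpleGraph Set

namespace HalinAux

def Itv (n : ℕ) (s : ZMod n) (l : ℕ) : Set (ZMod n) := {x | ∃ j : ℕ, j < l ∧ x = s + (j : ZMod n)}

lemma mem_Itv {n : ℕ} {s x : ZMod n} {l : ℕ} : x ∈ Itv n s l ↔ ∃ j : ℕ, j < l ∧ x = s + (j : ZMod n) := Iff.rfl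

lemma zmod_cast_inj {n : ℕ} [NeZero n] {a b : ℕ} (ha : a < n) (hb : b < n)
    (h : (a : ZMod n) = (b : ZMod n)) : a = b := by
  have := congrArg ZMod.val h
  rwa [ZMod.val_natCast, ZMod.val_natCast, Nat.mod_eq_of_lt ha, Nat.mod_eq_of_lt hb] at this

lemma Itv_eq_univ {n : ℕ} [NeZero n] {s : ZMod n} {l : ℕ} (h : n ≤ l) : Itv n s l = univ := by
  ext x
  simp only [Itv, mem_setOf_eq, mem_univ, iff_true]
  refine ⟨(x - s).val, lt_of_lt_of_le (ZMod.val_lt _) h, ?_⟩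
  simp [ZMod.natCast_val, ZMod.cast_id]

lemma last_not_mem_Itv {n : ℕ} [NeZero n] {s : ZMod n} {l : ℕ} (hn : 1 ≤ n) (h : l ≤ n - 1) :
    s + ((n - 1 : ℕ) : ZMod n) ∉ Itv n s l := by
  rintro ⟨j, hj, hx⟩
  have := zmod_cast_inj (a := n-1) (b := j) (by omega) (by omega) (add_left_cancel hx)
  omega

lemma cyclic_normalize {n : ℕ} [NeZero n] {A : Set (ZMod n)} (hA : CyclicInterval n A)
    (hne : A.Nonempty) (hproper : A ≠ univ) : ∃ (t : ZMod n) (L : ℕ), 1 ≤ L ∧ L < n ∧ A = Itv n t L := by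
  obtain ⟨t, L, hL⟩ := hA
  have hAI : A = Itv n t L := hL
  refine ⟨t, L, ?_, ?_, hAI⟩
  · rcases hne with ⟨x, hx⟩
    rw [hAI] at hx
    obtain ⟨j, hj, _⟩ := hx
    omega
  · by_contra h
    exact hproper (hAI.trans (Itv_eq_univ (by omega)))

lemma interval_split_aux {n : ℕ} [NeZero n] (hn : 3 ≤ n) {s : ZMod n} {l : ℕ}
    (hl : l ≤ n - 1) {A B : Set (ZMod n)}
    (hA : CyclicInterval n A) (hAne : A.Nonempty) (hBne : B.Nonempty)
    (hdisj : ∀ x, x ∈ A → x ∉ B) (hunion : A ∪ B = Itv n s l) (hs : s ∈ A) :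
    ∃ la : ℕ, 1 ≤ la ∧ la < l ∧ A = Itv n s la ∧ B = Itv n (s + (la : ZMod n)) (l - la) := by
  have hAsub : A ⊆ Itv n s l := hunion ▸ subset_union_left
  have hBsub : B ⊆ Itv n s l := hunion ▸ subset_union_right
  have hproper : A ≠ univ := by
    intro h
    exact last_not_mem_Itv (by omega) hl (hAsub (h ▸ mem_univ _))
  obtain ⟨t, L, hL1, hLn, hAI⟩ := cyclic_normalize hA hAne hproper
  -- show t = s
  obtain ⟨j0, hj0, hsj0⟩ := hAI ▸ hs
  have hj00 : j0 = 0 := by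
    by_contra hj00
    -- then t + (j0 - 1) = s + (n-1) ∈ A, contradiction
    have hmem : t + ((j0 - 1 : ℕ) : ZMod n) ∈ A := hAI ▸ ⟨j0 - 1, by omega, rfl⟩
    have heq : t + ((j0 - 1 : ℕ) : ZMod n) = s + ((n - 1 : ℕ) : ZMod n) := by
      rw [hsj0]
      push_cast [Nat.cast_sub (by omega : 1 ≤ j0), Nat.cast_sub (by omega : 1 ≤ n)]
      rw [ZMod.natCast_self]
      ring
    exact last_not_mem_Itv (by omega) hl (hAsub (heq ▸ hmem))
  have hts : t = s := by rw [hsj0, hj00]; simp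
  rw [hts] at hAI
  -- A = Itv n s L; now L < l
  have hLl : L < l := by
    obtain ⟨b, hb⟩ := hBne
    obtain ⟨jb, hjb, hbe⟩ := hBsub hb
    have : ¬ jb < L := by
      intro h
      exact hdisj b (hAI ▸ ⟨jb, h, hbe⟩) hb
    omega
  refine ⟨L, hL1, hLl, hAI, ?_⟩
  ext x
  constructor
  · intro hx
    obtain ⟨j, hj, hxe⟩ := hBsub hx
    have hjL : ¬ j < L := by
      intro h
      exact hdisj x (hAI ▸ ⟨j, h, hxe⟩) hx
    refine ⟨j - L, by omega, ?_⟩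
    rw [hxe]
    push_cast [Nat.cast_sub (by omega : L ≤ j)]
    ring
  · rintro ⟨k, hk, hxe⟩
    have hxI : x ∈ Itv n s l := by
      refine ⟨L + k, by omega, ?_⟩
      rw [hxe]; push_cast; ring
    have hxA : x ∉ A := by
      rw [hAI]
      rintro ⟨j', hj', hxe'⟩
      rw [hxe'] at hxe
      have : (j' : ZMod n) = ((L + k : ℕ) : ZMod n) := by
        push_cast
        rw [add_assoc] at hxe
        exact add_left_cancel hxe
      have := zmod_cast_inj (by omega) (by omega) this
      omega
    rcases (hunion ▸ hxI : x ∈ A ∪ B) with h | h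
    · exact absurd h hxA
    · exact h

lemma interval_split {n : ℕ} [NeZero n] (hn : 3 ≤ n) {s : ZMod n} {l : ℕ}
    (hl : l ≤ n - 1) {A B : Set (ZMod n)}
    (hA : CyclicInterval n A) (hB : CyclicInterval n B) (hAne : A.Nonempty) (hBne : B.Nonempty)
    (hdisj : ∀ x, x ∈ A → x ∉ B) (hunion : A ∪ B = Itv n s l) :
    ∃ la : ℕ, 1 ≤ la ∧ la < l ∧
      ((A = Itv n s la ∧ B = Itv n (s + (la : ZMod n)) (l - la)) ∨
       (B = Itv n s la ∧ A = Itv n (s + (la : ZMod n)) (l - la))) := by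
  have hl1 : 1 ≤ l := by
    obtain ⟨x, hx⟩ := hAne
    obtain ⟨j, hj, _⟩ := (hunion ▸ (subset_union_left (t := B))) hx
    omega
  have hsmem : s ∈ A ∪ B := by
    rw [hunion]
    exact ⟨0, by omega, by simp⟩
  rcases hsmem with h | h
  · obtain ⟨la, h1, h2, h3, h4⟩ := interval_split_aux hn hl hA hAne hBne hdisj hunion h
    exact ⟨la, h1, h2, Or.inl ⟨h3, h4⟩⟩
  · obtain ⟨la, h1, h2, h3, h4⟩ := interval_split_aux hn hl hB hBne hAne
      (fun x hx hx' => hdisj x hx' hx) (by rw [union_comm]; exact hunion) h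
    exact ⟨la, h1, h2, Or.inr ⟨h3, h4⟩⟩


section Tree

variable {V : Type*}

/-- Component of `v` in `T` minus edge `vp`. -/
def Rset (T : SimpleGraph V) (v p : V) : Set V :=
  {x | (T.deleteEdges {s(v,p)}).Reachable v x}

lemma mem_Rset_self (T : SimpleGraph V) (v p : V) : v ∈ Rset T v p := Reachable.refl v

lemma Rset_swap_edge (T : SimpleGraph V) (v p : V) :
    Rset T p v = {x | (T.deleteEdges {s(v,p)}).Reachable p x} := by
  unfold Rset
  rw [Sym2.eq_swap]

lemma not_reach_of_acyclic {T : SimpleGraph V} (hac : T.IsAcyclic) {v p : V} (h : T.Adj v p) :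
    p ∉ Rset T v p := by
  have hb := (isAcyclic_iff_forall_adj_isBridge.mp hac) h
  rw [isBridge_iff] at hb
  exact hb

/-- From a walk avoiding vertex `v`, edges lie in `T` minus any set of edges all containing `v`. -/
lemma edges_subset_of_avoid {T : SimpleGraph V} {E : Set (Sym2 V)} {u x v : V}
    (w : (T.deleteEdges E).Walk u x) (hv : v ∉ w.support) (F : Set (Sym2 V))
    (hF : ∀ f ∈ F, v ∈ f) : ∀ e ∈ w.edges, e ∈ (T.deleteEdges F).edgeSet := by
  intro e he
  rw [edgeSet_deleteEdges]
  constructor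
  · have := w.edges_subset_edgeSet he
    rw [edgeSet_deleteEdges] at this
    exact this.1
  · intro hef
    induction e with
    | h a b =>
      have hv' : v ∈ s(a, b) := hF _ hef
      rcases Sym2.mem_iff.mp hv' with rfl | rfl
      · exact hv (w.fst_mem_support_of_mem_edges he)
      · exact hv (w.snd_mem_support_of_mem_edges he)

/-- If `u` is reachable from `x` but `v` is not reachable from `u`, there is a walk avoiding `v`. -/
lemma exists_walk_avoid {H : SimpleGraph V} {u x v : V} (hux : H.Reachable u x)
    (hv : ¬ H.Reachable u v) : ∃ w : H.Walk u x, v ∉ w.support := by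
  classical
  obtain ⟨w⟩ := hux
  exact ⟨w, fun hmem => hv ⟨w.takeUntil v hmem⟩⟩

/-- Monotonicity: the component of `u` (over deleted edge `uv`) is inside the component of `v`
(over deleted edge `vp`), provided `u ≠ p`. -/
lemma Rset_mono {T : SimpleGraph V} (hac : T.IsAcyclic) {v p u : V}
    (hvp : T.Adj v p) (huv : T.Adj u v) (hup : u ≠ p) : Rset T u v ⊆ Rset T v p := by
  intro x hx
  have hnv : ¬ (T.deleteEdges {s(u,v)}).Reachable u v := not_reach_of_acyclic hac huv
  obtain ⟨w, hw⟩ := exists_walk_avoid hx hnv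
  have hsub := edges_subset_of_avoid w hw {s(v,p)} (by
    intro f hf
    rw [mem_singleton_iff] at hf
    subst hf
    exact Sym2.mem_mk_left v p)
  refine Reachable.trans ⟨Walk.cons ?_ Walk.nil⟩ ⟨w.transfer _ hsub⟩
  rw [deleteEdges_adj, mem_singleton_iff]
  refine ⟨huv.symm, ?_⟩
  intro h
  rcases Sym2.eq_iff.mp h with ⟨h1, h2⟩ | ⟨h1, h2⟩
  · exact hup h2
  · exact (T.irrefl (h1 ▸ hvp))

lemma Rset_disjoint {T : SimpleGraph V} (hac : T.IsAcyclic) {v p : V} (hvp : T.Adj v p) :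
    ∀ x, x ∈ Rset T v p → x ∉ Rset T p v := by
  intro x hx hx'
  rw [Rset_swap_edge] at hx'
  exact not_reach_of_acyclic hac hvp (hx.trans hx'.symm)

lemma Rset_cover {T : SimpleGraph V} (hconn : T.Connected) {v p : V} (hvp : T.Adj v p) :
    ∀ x, x ∈ Rset T v p ∨ x ∈ Rset T p v := by
  have key : ∀ (a b : V) (w : T.Walk a b),
      b ∈ Rset T v p ∨ b ∈ Rset T p v → a ∈ Rset T v p ∨ a ∈ Rset T p v := by
    intro a b w
    induction w with
    | nil => exact id
    | @cons a' b' c' h q ih =>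
      intro hyp
      rcases ih hyp with h1 | h1
      · by_cases he : s(a', b') = s(v, p)
        · rcases Sym2.eq_iff.mp he with ⟨rfl, rfl⟩ | ⟨rfl, rfl⟩
          · exact Or.inl (mem_Rset_self T _ _)
          · exact Or.inr (mem_Rset_self T _ _)
        · refine Or.inl (Reachable.trans h1 (Reachable.symm ⟨Walk.cons ?_ Walk.nil⟩))
          rw [deleteEdges_adj, mem_singleton_iff]
          exact ⟨h, he⟩
      · by_cases he : s(a', b') = s(p, v)
        · rcases Sym2.eq_iff.mp he with ⟨rfl, rfl⟩ | ⟨rfl, rfl⟩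
          · exact Or.inr (mem_Rset_self T _ _)
          · exact Or.inl (mem_Rset_self T _ _)
        · refine Or.inr (Reachable.trans h1 (Reachable.symm ⟨Walk.cons ?_ Walk.nil⟩))
          rw [deleteEdges_adj, mem_singleton_iff]
          exact ⟨h, he⟩
  intro x
  obtain ⟨w⟩ := hconn.preconnected x v
  exact key x v w (Or.inl (mem_Rset_self T v p))

/-- Decomposition of a component at an internal vertex. -/
lemma Rset_step {T : SimpleGraph V} {v p x : V} (hvp : T.Adj v p)
    (hx : x ∈ Rset T v p) (hxv : x ≠ v) :
    ∃ u, T.Adj v u ∧ u ≠ p ∧ x ∈ Rset T u v := by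
  classical
  obtain ⟨w0⟩ := (hx : (T.deleteEdges {s(v,p)}).Reachable v x)
  obtain ⟨w, hwp⟩ : ∃ w : (T.deleteEdges {s(v,p)}).Walk v x, w.IsPath := ⟨w0.toPath, w0.toPath.2⟩
  cases w with
  | nil => exact absurd rfl hxv.symm
  | @cons _ u' _ h q =>
    have hq : q.IsPath ∧ v ∉ q.support := by
      rw [Walk.cons_isPath_iff] at hwp
      exact ⟨hwp.1, hwp.2⟩
    have hadj : T.Adj v u' ∧ s(v, u') ∉ ({s(v,p)} : Set (Sym2 V)) := by
      rw [deleteEdges_adj] at h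
      exact h
    have hup : u' ≠ p := by
      intro hh
      apply hadj.2
      rw [hh]
      exact rfl
    refine ⟨u', hadj.1, hup, ?_⟩
    have hsub := edges_subset_of_avoid q hq.2 {s(u', v)} (by
      intro f hf
      rw [mem_singleton_iff] at hf
      subst hf
      exact Sym2.mem_mk_right u' v)
    exact ⟨q.transfer _ hsub⟩

end Tree

section Leaves

variable {V : Type*} [Fintype V] {n : ℕ}

lemma three_nbrs {s : Set V} (h : s.ncard = 3) {p : V} (hp : p ∈ s) :
    ∃ u1 u2, u1 ≠ u2 ∧ u1 ≠ p ∧ u2 ≠ p ∧ s = {p, u1, u2} := by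
  rw [Set.ncard_eq_three] at h
  obtain ⟨a, b, c, hab, hac, hbc, rfl⟩ := h
  simp only [mem_insert_iff, mem_singleton_iff] at hp
  rcases hp with rfl | rfl | rfl
  · exact ⟨b, c, hbc, fun h => hab h.symm, fun h => hac h.symm, rfl⟩
  · refine ⟨a, c, hac, hab, fun h => hbc h.symm, ?_⟩
    ext x; simp only [mem_insert_iff, mem_singleton_iff]; tauto
  · refine ⟨a, b, hab, hac, hbc, ?_⟩
    ext x; simp only [mem_insert_iff, mem_singleton_iff]; tauto

lemma exists_leaf_in_Rset {T : SimpleGraph V} {σ : ZMod n → V} (hac : T.IsAcyclic)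
    (h3 : ∀ w : V, w ∉ Set.range σ → (T.neighborSet w).ncard = 3) :
    ∀ (m : ℕ) (v p : V), T.Adj v p → (Rset T v p).ncard ≤ m → ∃ i, σ i ∈ Rset T v p := by
  intro m
  induction m with
  | zero =>
    intro v p hvp hm
    exfalso
    have h1 : 1 ≤ (Rset T v p).ncard := by
      rw [show (1:ℕ) ≤ (Rset T v p).ncard ↔ 0 < (Rset T v p).ncard from Iff.rfl,
        Set.ncard_pos (Set.toFinite _)]
      exact ⟨v, mem_Rset_self T v p⟩
    omega
  | succ m ih =>
    intro v p hvp hm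
    by_cases hv : v ∈ Set.range σ
    · obtain ⟨i, rfl⟩ := hv
      exact ⟨i, mem_Rset_self T _ _⟩
    · have h3v := h3 v hv
      obtain ⟨u1, u2, h12, h1p, h2p, hset⟩ := three_nbrs h3v (by exact hvp)
      have hu1 : T.Adj v u1 := by
        have : u1 ∈ T.neighborSet v := by rw [hset]; simp
        exact this
      have hsub : Rset T u1 v ⊆ Rset T v p := Rset_mono hac hvp hu1.symm h1p
      have hss : Rset T u1 v ⊂ Rset T v p := by
        refine ⟨hsub, fun hcon => ?_⟩
        exact not_reach_of_acyclic hac hu1.symm (hcon (mem_Rset_self T v p))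
      have hlt : (Rset T u1 v).ncard < (Rset T v p).ncard :=
        Set.ncard_lt_ncard hss (Set.toFinite _)
      obtain ⟨i, hi⟩ := ih u1 v hu1.symm (by omega)
      exact ⟨i, hsub hi⟩

end Leaves

section EdgeSets

variable {V : Type*} {n : ℕ}

def cyE (σ : ZMod n → V) (i : ZMod n) : Sym2 V := s(σ i, σ (i+1))

def Lset (T : SimpleGraph V) (σ : ZMod n → V) (v p : V) : Set (ZMod n) :=
  {i | σ i ∈ Rset T v p}

def ES (T : SimpleGraph V) (σ : ZMod n → V) (v p : V) : Set (Sym2 V) :=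
  {e | e = s(v,p) ∨ (e ∈ T.edgeSet ∧ ∀ w ∈ e, w ∈ Rset T v p) ∨
    (∃ i, i ∈ Lset T σ v p ∧ i+1 ∈ Lset T σ v p ∧ e = cyE σ i)}

lemma mem_ES_iff {T : SimpleGraph V} {σ : ZMod n → V} {v p : V} {e : Sym2 V} :
    e ∈ ES T σ v p ↔ e = s(v,p) ∨ (e ∈ T.edgeSet ∧ ∀ w ∈ e, w ∈ Rset T v p) ∨
    (∃ i, i ∈ Lset T σ v p ∧ i+1 ∈ Lset T σ v p ∧ e = cyE σ i) := Iff.rfl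

/-- Every vertex of an edge of `ES v p` lies in the component of `v`, or is `p`. -/
lemma ES_vertex {T : SimpleGraph V} {σ : ZMod n → V} {v p : V} {e : Sym2 V}
    (he : e ∈ ES T σ v p) {w : V} (hw : w ∈ e) : w ∈ Rset T v p ∨ w = p := by
  rcases he with rfl | ⟨_, h2⟩ | ⟨i, hi, hi1, rfl⟩
  · rcases Sym2.mem_iff.mp hw with rfl | rfl
    · exact Or.inl (mem_Rset_self T w p)
    · exact Or.inr rfl
  · exact Or.inl (h2 w hw)
  · rcases Sym2.mem_iff.mp hw with rfl | rfl
    · exact Or.inl hi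
    · exact Or.inl hi1

end EdgeSets

lemma zmod_val_cast_back {n : ℕ} [NeZero n] (a : ZMod n) : ((a.val : ℕ) : ZMod n) = a := by
  simp [ZMod.natCast_val, ZMod.cast_id]

lemma Rset_leaf {V : Type*} {T : SimpleGraph V} {w p : V} (hnbr : T.neighborSet w = {p}) :
    Rset T w p = {w} := by
  ext z
  constructor
  · intro hz
    obtain ⟨q⟩ := (hz : (T.deleteEdges {s(w, p)}).Reachable w z)
    cases q with
    | nil => exact rfl
    | @cons _ b _ h q =>
      exfalso
      rw [deleteEdges_adj] at h
      have hb : b ∈ T.neighborSet w := h.1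
      rw [hnbr, mem_singleton_iff] at hb
      subst hb
      exact h.2 rfl
  · intro hz
    rw [mem_singleton_iff] at hz
    subst hz
    exact mem_Rset_self T _ _

section Main

variable {V : Type*} [Fintype V] {n : ℕ} [NeZero n] {T : SimpleGraph V} {σ : ZMod n → V}

/-- The main inductive claim: every oriented subtree whose leaf set is a cyclic interval
of length `l` admits a proper partial edge colouring with any prescribed pairwise distinct
interface colours. -/
lemma main_claim (hac : T.IsAcyclic) (hconn : T.Connected) (hn3 : 3 ≤ n)
    (hinj : Function.Injective σ)
    (hrange : Set.range σ = {v : V | (T.neighborSet v).ncard = 1})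
    (h3 : ∀ w : V, w ∉ Set.range σ → (T.neighborSet w).ncard = 3)
    (hcyT : ∀ i : ZMod n, ¬ T.Adj (σ i) (σ (i+1)))
    (hint : ∀ a b : V, T.Adj a b →
      CyclicInterval n {i : ZMod n | (T.deleteEdges {s(a, b)}).Reachable a (σ i)}) :
    ∀ l : ℕ, ∀ v p : V, T.Adj v p → ∀ s : ZMod n,
    Lset T σ v p = Itv n s l → l ≤ n - 1 →
    ∀ a x y : Fin 3, a ≠ x → a ≠ y → x ≠ y →
    ∃ C : Sym2 V → Fin 3,
      C s(v,p) = a ∧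
      (∀ e ∈ ES T σ v p, ∀ f ∈ ES T σ v p, e ≠ f → (∃ w, w ∈ e ∧ w ∈ f) → C e ≠ C f) ∧
      (∀ e ∈ ES T σ v p, σ s ∈ e → C e ≠ x) ∧
      (∀ e ∈ ES T σ v p, σ (s + ((l - 1 : ℕ) : ZMod n)) ∈ e → C e ≠ y) := by
  classical
  have hone : ((1 : ℕ) : ZMod n) ≠ 0 := by
    intro h
    have := zmod_cast_inj (n := n) (a := 1) (b := 0) (by omega) (by omega)
      (by rw [h, Nat.cast_zero])
    omega
  have htwo : ((2 : ℕ) : ZMod n) ≠ 0 := by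
    intro h
    have := zmod_cast_inj (n := n) (a := 2) (b := 0) (by omega) (by omega)
      (by rw [h, Nat.cast_zero])
    omega
  have hσne1 : ∀ i : ZMod n, σ i ≠ σ (i + 1) := by
    intro i h
    have h2 := hinj h
    rw [left_eq_add] at h2
    exact hone (by rw [Nat.cast_one]; exact h2)
  have hidx : ∀ (s' : ZMod n) (j1 j2 : ℕ), j1 < n → j2 < n →
      s' + (j1 : ZMod n) = s' + (j2 : ZMod n) → j1 = j2 := by
    intro s' j1 j2 h1 h2 h
    exact zmod_cast_inj h1 h2 (add_left_cancel h)
  have hnbrleaf : ∀ (i : ZMod n) (p : V), T.Adj (σ i) p → T.neighborSet (σ i) = {p} := by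
    intro i p hadj
    have h1 : (T.neighborSet (σ i)).ncard = 1 := by
      have hh : σ i ∈ Set.range σ := Set.mem_range_self i
      rw [hrange] at hh
      exact hh
    obtain ⟨q, hq⟩ := Set.ncard_eq_one.mp h1
    have hp : p ∈ T.neighborSet (σ i) := hadj
    rw [hq] at hp ⊢
    rw [mem_singleton_iff] at hp
    rw [hp]
  have hRleaf : ∀ (i : ZMod n) (p : V), T.Adj (σ i) p → Rset T (σ i) p = {σ i} := by
    intro i p hadj
    ext z
    constructor
    · intro hz
      obtain ⟨w⟩ := (hz : (T.deleteEdges {s(σ i, p)}).Reachable (σ i) z)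
      cases w with
      | nil => exact rfl
      | @cons _ b _ h q =>
        exfalso
        rw [deleteEdges_adj] at h
        have hb : b ∈ T.neighborSet (σ i) := h.1
        rw [hnbrleaf i p hadj, mem_singleton_iff] at hb
        subst hb
        exact h.2 rfl
    · intro hz
      rw [mem_singleton_iff] at hz
      subst hz
      exact mem_Rset_self T _ _
  have hcyEinj : ∀ i j : ZMod n, cyE σ i = cyE σ j → i = j := by
    intro i j h
    rcases Sym2.eq_iff.mp h with ⟨h1, _⟩ | ⟨h1, h2⟩
    · exact hinj h1
    · exfalso
      have e1 := hinj h1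
      have e2 := hinj h2
      rw [e1] at e2
      have : j = j + ((2:ℕ) : ZMod n) := by
        conv_lhs => rw [← e2]
        push_cast
        ring
      rw [left_eq_add] at this
      exact htwo this
  intro l
  induction l using Nat.strong_induction_on with
  | _ l IH =>
  intro v p hvp s hLs hln a x y hax hay hxy
  by_cases hv : v ∈ Set.range σ
  · -- leaf case
    obtain ⟨i, rfl⟩ := hv
    have hR : Rset T (σ i) p = {σ i} := hRleaf i p hvp
    have hLs' : Lset T σ (σ i) p = {i} := by
      ext j
      simp only [Lset, mem_setOf_eq, hR, mem_singleton_iff]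
      exact ⟨fun h => hinj h, fun h => h ▸ rfl⟩
    rw [hLs'] at hLs
    have hl1 : 1 ≤ l := by
      by_contra h
      have : l = 0 := by omega
      subst this
      have : i ∈ Itv n s 0 := by rw [← hLs]; exact rfl
      obtain ⟨j, hj, _⟩ := this
      omega
    have hsi : s = i := by
      have : s ∈ Itv n s l := ⟨0, by omega, by simp⟩
      rw [← hLs] at this
      exact this
    have hl : l = 1 := by
      by_contra h
      have h2 : 2 ≤ l := by omega
      have hmem : s + ((1:ℕ) : ZMod n) ∈ Itv n s l := ⟨1, by omega, rfl⟩
      rw [← hLs, mem_singleton_iff] at hmem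
      rw [← hsi] at hmem
      have : ((1:ℕ) : ZMod n) = ((0:ℕ) : ZMod n) := by
        apply add_left_cancel (a := s)
        rw [hmem]; simp
      exact hone (by rw [this, Nat.cast_zero])
    have hES : ∀ e ∈ ES T σ (σ i) p, e = s(σ i, p) := by
      intro e he
      rcases he with he | ⟨heT, hsub⟩ | ⟨j, hj, hj1, rfl⟩
      · exact he
      · exfalso
        induction e with
        | h e1 e2 =>
          have h1 : e1 ∈ Rset T (σ i) p := hsub e1 (Sym2.mem_mk_left _ _)
          have h2 : e2 ∈ Rset T (σ i) p := hsub e2 (Sym2.mem_mk_right _ _)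
          rw [hR, mem_singleton_iff] at h1 h2
          have : T.Adj e1 e2 := heT
          rw [h1, h2] at this
          exact T.irrefl this
      · exfalso
        rw [hLs', mem_singleton_iff] at hj hj1
        rw [← hj] at hj1
        have : j = j + ((1:ℕ) : ZMod n) := by
          conv_lhs => rw [← hj1]
          push_cast
          ring
        rw [left_eq_add] at this
        exact hone this
    refine ⟨fun _ => a, rfl, ?_, ?_, ?_⟩
    · intro e he f hf hef _
      exact absurd ((hES e he).trans (hES f hf).symm) hef
    · intro e _ _
      exact hax
    · intro e _ _
      exact hay
  · -- internal case
    have h3v := h3 v hv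
    obtain ⟨u1, u2, h12, h1p, h2p, hset⟩ := three_nbrs h3v (hvp : p ∈ T.neighborSet v)
    have hu1 : T.Adj v u1 := by
      have : u1 ∈ T.neighborSet v := by rw [hset]; simp
      exact this
    have hu2 : T.Adj v u2 := by
      have : u2 ∈ T.neighborSet v := by rw [hset]; simp
      exact this
    have hAcyc : CyclicInterval n (Lset T σ u1 v) := hint u1 v hu1.symm
    have hBcyc : CyclicInterval n (Lset T σ u2 v) := hint u2 v hu2.symm
    have hAne : (Lset T σ u1 v).Nonempty :=
      exists_leaf_in_Rset hac h3 ((Rset T u1 v).ncard) u1 v hu1.symm le_rfl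
    have hBne : (Lset T σ u2 v).Nonempty :=
      exists_leaf_in_Rset hac h3 ((Rset T u2 v).ncard) u2 v hu2.symm le_rfl
    have hdisjR : ∀ z, z ∈ Rset T u1 v → z ∉ Rset T u2 v := by
      intro z hz1 hz2
      have hsub : Rset T u2 v ⊆ Rset T v u1 := Rset_mono hac hu1 hu2.symm h12.symm
      exact Rset_disjoint hac hu1.symm z hz1 (hsub hz2)
    have hsubR1 : Rset T u1 v ⊆ Rset T v p := Rset_mono hac hvp hu1.symm h1p
    have hsubR2 : Rset T u2 v ⊆ Rset T v p := Rset_mono hac hvp hu2.symm h2p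
    have hdecomp : ∀ z ∈ Rset T v p, z = v ∨ z ∈ Rset T u1 v ∨ z ∈ Rset T u2 v := by
      intro z hz
      by_cases hzv : z = v
      · exact Or.inl hzv
      · obtain ⟨u, hvu, hup, hzu⟩ := Rset_step hvp hz hzv
        have : u ∈ T.neighborSet v := hvu
        rw [hset] at this
        rcases this with rfl | rfl | rfl
        · exact absurd rfl hup
        · exact Or.inr (Or.inl hzu)
        · exact Or.inr (Or.inr hzu)
    have hunion : Lset T σ u1 v ∪ Lset T σ u2 v = Itv n s l := by
      rw [← hLs]
      ext j
      constructor
      · rintro (hj | hj)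
        · exact hsubR1 hj
        · exact hsubR2 hj
      · intro hj
        rcases hdecomp (σ j) hj with hj' | hj' | hj'
        · exact absurd ⟨j, hj'⟩ hv
        · exact Or.inl hj'
        · exact Or.inr hj'
    obtain ⟨la, hla1, hlal, hcase⟩ :=
      interval_split hn3 hln hAcyc hBcyc hAne hBne (fun z hz hz' => hdisjR _ hz hz') hunion
    obtain ⟨w1, w2, hw12, hw1p, hw2p, hvw1, hvw2, hnbrW, hdisjW, hsub1, hsub2, hdecW,
        hA1, hB1⟩ :
        ∃ w1 w2 : V, w1 ≠ w2 ∧ w1 ≠ p ∧ w2 ≠ p ∧ T.Adj v w1 ∧ T.Adj v w2 ∧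
          T.neighborSet v = {p, w1, w2} ∧
          (∀ z, z ∈ Rset T w1 v → z ∉ Rset T w2 v) ∧
          Rset T w1 v ⊆ Rset T v p ∧ Rset T w2 v ⊆ Rset T v p ∧
          (∀ z ∈ Rset T v p, z = v ∨ z ∈ Rset T w1 v ∨ z ∈ Rset T w2 v) ∧
          Lset T σ w1 v = Itv n s la ∧ Lset T σ w2 v = Itv n (s + (la : ZMod n)) (l - la) := by
      rcases hcase with ⟨hx1, hx2⟩ | ⟨hx1, hx2⟩
      · exact ⟨u1, u2, h12, h1p, h2p, hu1, hu2, hset, hdisjR, hsubR1, hsubR2, hdecomp,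
          hx1, hx2⟩
      · refine ⟨u2, u1, h12.symm, h2p, h1p, hu2, hu1, ?_, ?_, hsubR2, hsubR1, ?_, hx1, hx2⟩
        · rw [hset]; ext z; simp only [mem_insert_iff, mem_singleton_iff]; tauto
        · intro z hz2 hz1
          exact hdisjR z hz1 hz2
        · intro z hz
          rcases hdecomp z hz with h | h | h
          · exact Or.inl h
          · exact Or.inr (Or.inr h)
          · exact Or.inr (Or.inl h)
    -- interface colours: left subtree (y, x, a), right subtree (x, a, y), middle edge a
    obtain ⟨C1, hC1a, hC1prop, hC1x, hC1y⟩ :=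
      IH la hlal w1 v hvw1.symm s hA1 (by omega) y x a hxy.symm (Ne.symm hay) (Ne.symm hax)
    obtain ⟨C2, hC2a, hC2prop, hC2x, hC2y⟩ :=
      IH (l - la) (by omega) w2 v hvw2.symm (s + (la : ZMod n)) hB1 (by omega)
        x a y (Ne.symm hax) hxy hay
    -- the boundary cycle edge
    set ib : ZMod n := s + ((la - 1 : ℕ) : ZMod n) with hib
    have hln' : l < n := by omega
    have hba : ib + 1 = s + (la : ZMod n) := by
      rw [hib, add_assoc]
      congr 1
      push_cast [Nat.cast_sub (show 1 ≤ la by omega)]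
      ring
    have hibA : ib ∈ Itv n s la := ⟨la - 1, by omega, rfl⟩
    have hibB : s + (la : ZMod n) ∈ Itv n (s + (la : ZMod n)) (l - la) :=
      ⟨0, by omega, by simp⟩
    have hlaB : s + (la : ZMod n) ∉ Itv n s la := by
      rintro ⟨j, hj, hje⟩
      have := hidx s la j (by omega) (by omega) hje
      omega
    have hibnB : ib ∉ Itv n (s + (la : ZMod n)) (l - la) := by
      rintro ⟨k, hk, hke⟩
      rw [hib] at hke
      rw [add_assoc, ← Nat.cast_add] at hke
      have := hidx s (la - 1) (la + k) (by omega) (by omega) hke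
      omega
    -- σ-level membership
    have hσmem1 : ∀ j : ZMod n, σ j ∈ Rset T w1 v ↔ j ∈ Itv n s la := by
      intro j
      rw [← hA1]
      exact Iff.rfl
    have hσmem2 : ∀ j : ZMod n, σ j ∈ Rset T w2 v ↔ j ∈ Itv n (s + (la : ZMod n)) (l - la) := by
      intro j
      rw [← hB1]
      exact Iff.rfl
    have hvnotR1 : v ∉ Rset T w1 v := not_reach_of_acyclic hac hvw1.symm
    have hvnotR2 : v ∉ Rset T w2 v := not_reach_of_acyclic hac hvw2.symm
    have hpnotR : p ∉ Rset T v p := not_reach_of_acyclic hac hvp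
    -- basic exclusions
    have F1 : s(v, p) ∉ ES T σ w1 v := by
      intro hmem
      rcases ES_vertex hmem (Sym2.mem_mk_right v p) with h | h
      · exact hpnotR (hsub1 h)
      · exact T.irrefl (h ▸ hvp)
    have F2 : s(v, p) ∉ ES T σ w2 v := by
      intro hmem
      rcases ES_vertex hmem (Sym2.mem_mk_right v p) with h | h
      · exact hpnotR (hsub2 h)
      · exact T.irrefl (h ▸ hvp)
    -- edges of ES w v containing v are exactly the head edge
    have hEShead : ∀ (w' : V), T.Adj v w' → ∀ e ∈ ES T σ w' v, v ∈ e → e = s(w', v) := by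
      intro w' hvw' e he hve
      rcases he with he | ⟨heT, hsubE⟩ | ⟨j, hj, hj1, rfl⟩
      · exact he
      · exfalso
        exact not_reach_of_acyclic hac hvw'.symm (hsubE v hve)
      · exfalso
        rcases Sym2.mem_iff.mp hve with h | h
        · exact hv ⟨j, h.symm⟩
        · exact hv ⟨j + 1, h.symm⟩
    have hESne : ∀ (w' : V), T.Adj v w' → ∀ e ∈ ES T σ w' v,
        ∃ z1 z2 : V, z1 ≠ z2 ∧ e = s(z1, z2) := by
      intro w' hvw' e he
      rcases he with he | ⟨heT, _⟩ | ⟨j, _, _, rfl⟩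
      · exact ⟨w', v, (hvw'.symm).ne, he⟩
      · induction e with
        | h e1 e2 =>
          exact ⟨e1, e2, (heT : T.Adj e1 e2).ne, rfl⟩
      · exact ⟨σ j, σ (j + 1), hσne1 j, rfl⟩
    have F3 : ∀ e ∈ ES T σ w1 v, e ∉ ES T σ w2 v := by
      intro e he1 he2
      obtain ⟨z1, z2, hz12, rfl⟩ := hESne w1 hvw1 e he1
      have m1 : z1 = v ∨ z1 ∈ Rset T w1 v := by
        rcases ES_vertex he1 (Sym2.mem_mk_left z1 z2) with h | h
        · exact Or.inr h
        · exact Or.inl h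
      have m2 : z2 = v ∨ z2 ∈ Rset T w1 v := by
        rcases ES_vertex he1 (Sym2.mem_mk_right z1 z2) with h | h
        · exact Or.inr h
        · exact Or.inl h
      have m1' : z1 = v ∨ z1 ∈ Rset T w2 v := by
        rcases ES_vertex he2 (Sym2.mem_mk_left z1 z2) with h | h
        · exact Or.inr h
        · exact Or.inl h
      have m2' : z2 = v ∨ z2 ∈ Rset T w2 v := by
        rcases ES_vertex he2 (Sym2.mem_mk_right z1 z2) with h | h
        · exact Or.inr h
        · exact Or.inl h
      have hz1 : z1 = v := by
        rcases m1 with h | h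
        · exact h
        · rcases m1' with h' | h'
          · exact h'
          · exact absurd h' (hdisjW z1 h)
      have hz2 : z2 = v := by
        rcases m2 with h | h
        · exact h
        · rcases m2' with h' | h'
          · exact h'
          · exact absurd h' (hdisjW z2 h)
      exact hz12 (hz1.trans hz2.symm)
    -- the boundary cycle edge is in none of the pieces
    have hcyT' : ∀ j : ZMod n, cyE σ j ∉ T.edgeSet := by
      intro j h
      exact hcyT j h
    have hvcb : v ∉ cyE σ ib := by
      intro h
      rcases Sym2.mem_iff.mp h with h | h
      · exact hv ⟨ib, h.symm⟩
      · exact hv ⟨ib + 1, h.symm⟩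
    have F4h : cyE σ ib ≠ s(v, p) := by
      intro h
      exact hvcb (h ▸ Sym2.mem_mk_left v p)
    have F41 : cyE σ ib ∉ ES T σ w1 v := by
      intro hmem
      rcases hmem with he | ⟨heT, _⟩ | ⟨j, hj, hj1, hje⟩
      · exact hvcb (he ▸ Sym2.mem_mk_right w1 v)
      · exact hcyT' ib heT
      · have := hcyEinj _ _ hje
        subst this
        rw [hA1] at hj1
        rw [hba] at hj1
        exact hlaB hj1
    have F42 : cyE σ ib ∉ ES T σ w2 v := by
      intro hmem
      rcases hmem with he | ⟨heT, _⟩ | ⟨j, hj, hj1, hje⟩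
      · exact hvcb (he ▸ Sym2.mem_mk_right w2 v)
      · exact hcyT' ib heT
      · have := hcyEinj _ _ hje
        subst this
        rw [hB1] at hj
        exact hibnB hj
    -- decomposition of ES v p
    have hESdec : ∀ e ∈ ES T σ v p,
        e = s(v, p) ∨ e ∈ ES T σ w1 v ∨ e ∈ ES T σ w2 v ∨ e = cyE σ ib := by
      intro e he
      rcases he with he | ⟨heT, hsubE⟩ | ⟨j, hj, hj1, rfl⟩
      · exact Or.inl he
      · right
        induction e with
        | h e1 e2 =>
          have hadj : T.Adj e1 e2 := heT
          have m1 : e1 ∈ Rset T v p := hsubE e1 (Sym2.mem_mk_left _ _)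
          have m2 : e2 ∈ Rset T v p := hsubE e2 (Sym2.mem_mk_right _ _)
          by_cases h1v : e1 = v
          · subst h1v
            have : e2 ∈ T.neighborSet e1 := hadj
            rw [hnbrW] at this
            rcases this with rfl | rfl | rfl
            · exact absurd m2 hpnotR
            · exact Or.inl (Or.inl (Sym2.eq_swap))
            · exact Or.inr (Or.inl (Or.inl (Sym2.eq_swap)))
          · by_cases h2v : e2 = v
            · subst h2v
              have : e1 ∈ T.neighborSet e2 := hadj.symm
              rw [hnbrW] at this
              rcases this with rfl | rfl | rfl
              · exact absurd m1 hpnotR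
              · exact Or.inl (Or.inl rfl)
              · exact Or.inr (Or.inl (Or.inl rfl))
            · -- both endpoints away from v : the edge lies inside one component
              have step : ∀ w' : V, T.Adj v w' → e1 ∈ Rset T w' v → e2 ∈ Rset T w' v := by
                intro w' hvw' h1
                refine Reachable.trans h1 ⟨Walk.cons ?_ Walk.nil⟩
                rw [deleteEdges_adj, mem_singleton_iff]
                refine ⟨hadj, ?_⟩
                intro hcon
                rcases Sym2.eq_iff.mp hcon with ⟨he1, he2⟩ | ⟨he1, he2⟩
                · exact h2v he2
                · exact h1v he1
              rcases hdecW e1 m1 with h | h | h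
              · exact absurd h h1v
              · refine Or.inl (Or.inr (Or.inl ⟨heT, ?_⟩))
                intro z hz
                rcases Sym2.mem_iff.mp hz with rfl | rfl
                · exact h
                · exact step w1 hvw1 h
              · refine Or.inr (Or.inl (Or.inr (Or.inl ⟨heT, ?_⟩)))
                intro z hz
                rcases Sym2.mem_iff.mp hz with rfl | rfl
                · exact h
                · exact step w2 hvw2 h
      · -- cycle edge inside the interval
        rw [hLs] at hj hj1
        obtain ⟨jn, hjn, hjne⟩ := hj
        obtain ⟨jn', hjn', hjne'⟩ := hj1
        have hrel : jn' = jn + 1 := by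
          apply hidx s jn' (jn + 1) (by omega) (by omega)
          rw [← hjne']
          rw [hjne]
          push_cast
          ring
        subst hrel
        by_cases hc1 : jn + 1 < la
        · refine Or.inr (Or.inl (Or.inr (Or.inr ⟨j, ?_, ?_, rfl⟩)))
          · rw [hA1, hjne]
            exact ⟨jn, by omega, rfl⟩
          · rw [hA1, hjne]
            refine ⟨jn + 1, by omega, by push_cast; ring⟩
        · by_cases hc2 : jn + 1 = la
          · refine Or.inr (Or.inr (Or.inr ?_))
            rw [hjne, hib]
            have : la - 1 = jn := by omega
            rw [this]
          · refine Or.inr (Or.inr (Or.inl (Or.inr (Or.inr ⟨j, ?_, ?_, rfl⟩))))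
            · rw [hB1]
              refine ⟨jn - la, by omega, ?_⟩
              have hsum : la + (jn - la) = jn := by omega
              rw [hjne]
              conv_rhs => rw [add_assoc, ← Nat.cast_add, hsum]
            · rw [hB1]
              refine ⟨jn + 1 - la, by omega, ?_⟩
              have hsum : la + (jn + 1 - la) = jn + 1 := by omega
              rw [hjne]
              conv_rhs => rw [add_assoc, ← Nat.cast_add, hsum]
              push_cast
              ring
    -- endpoints of the boundary edge
    have hσib1 : σ ib ∈ Rset T w1 v := (hσmem1 ib).mpr hibA
    have hσla2 : σ (s + (la : ZMod n)) ∈ Rset T w2 v := (hσmem2 _).mpr hibB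
    have hσibn2 : σ ib ∉ Rset T w2 v := fun h => hibnB ((hσmem2 ib).mp h)
    have hσlan1 : σ (s + (la : ZMod n)) ∉ Rset T w1 v := fun h => hlaB ((hσmem1 _).mp h)
    -- shared-vertex analysis
    have hsh1h : ∀ e ∈ ES T σ w1 v, ∀ z, z ∈ s(v,p) → z ∈ e → e = s(w1, v) := by
      intro e he z hz hze
      rcases Sym2.mem_iff.mp hz with rfl | rfl
      · exact hEShead w1 hvw1 e he hze
      · exfalso
        rcases ES_vertex he hze with h | h
        · exact hpnotR (hsub1 h)
        · exact T.irrefl (h ▸ hvp)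
    have hsh2h : ∀ e ∈ ES T σ w2 v, ∀ z, z ∈ s(v,p) → z ∈ e → e = s(w2, v) := by
      intro e he z hz hze
      rcases Sym2.mem_iff.mp hz with rfl | rfl
      · exact hEShead w2 hvw2 e he hze
      · exfalso
        rcases ES_vertex he hze with h | h
        · exact hpnotR (hsub2 h)
        · exact T.irrefl (h ▸ hvp)
    have hshhb : ∀ z, z ∈ s(v,p) → z ∈ cyE σ ib → False := by
      intro z hz hzb
      rcases Sym2.mem_iff.mp hz with rfl | rfl
      · exact hvcb hzb
      · rcases Sym2.mem_iff.mp hzb with h | h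
        · exact hpnotR (h.symm ▸ hsub1 hσib1)
        · rw [hba] at h
          exact hpnotR (h.symm ▸ hsub2 hσla2)
    have hsh1b : ∀ e ∈ ES T σ w1 v, ∀ z, z ∈ e → z ∈ cyE σ ib → σ ib ∈ e := by
      intro e he z hze hzb
      rcases Sym2.mem_iff.mp hzb with h | h
      · rw [← h]
        exact hze
      · exfalso
        rw [hba] at h
        subst h
        rcases ES_vertex he hze with hh | hh
        · exact hdisjW _ hh hσla2
        · exact hv ⟨s + (la : ZMod n), hh⟩
    have hsh2b : ∀ e ∈ ES T σ w2 v, ∀ z, z ∈ e → z ∈ cyE σ ib → σ (s + (la : ZMod n)) ∈ e := by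
      intro e he z hze hzb
      rcases Sym2.mem_iff.mp hzb with h | h
      · exfalso
        subst h
        rcases ES_vertex he hze with hh | hh
        · exact hdisjW _ hσib1 hh
        · exact hv ⟨ib, hh⟩
      · rw [hba] at h
        rw [← h]
        exact hze
    have hsh12 : ∀ e ∈ ES T σ w1 v, ∀ f ∈ ES T σ w2 v, ∀ z, z ∈ e → z ∈ f →
        e = s(w1, v) ∧ f = s(w2, v) := by
      intro e he f hf z hze hzf
      have hzv : z = v := by
        rcases ES_vertex he hze with h1 | h1
        · rcases ES_vertex hf hzf with h2 | h2
          · exact absurd h2 (hdisjW z h1)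
          · exact h2
        · exact h1
      subst hzv
      exact ⟨hEShead w1 hvw1 e he hze, hEShead w2 hvw2 f hf hzf⟩
    -- the combined colouring
    set C : Sym2 V → Fin 3 := fun e =>
      if e = s(v,p) then a else if e ∈ ES T σ w1 v then C1 e
      else if e ∈ ES T σ w2 v then C2 e else a with hCdef
    have hCvh : C s(v,p) = a := by rw [hCdef]; simp
    have hCv1 : ∀ e ∈ ES T σ w1 v, C e = C1 e := by
      intro e he
      have h1 : e ≠ s(v,p) := fun h => F1 (h ▸ he)
      rw [hCdef]
      simp only [if_neg h1, if_pos he]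
    have hCv2 : ∀ e ∈ ES T σ w2 v, C e = C2 e := by
      intro e he
      have h1 : e ≠ s(v,p) := fun h => F2 (h ▸ he)
      have h2 : e ∉ ES T σ w1 v := fun h => F3 e h he
      rw [hCdef]
      simp only [if_neg h1, if_neg h2, if_pos he]
    have hCvb : C (cyE σ ib) = a := by
      rw [hCdef]
      simp only [if_neg F4h, if_neg F41, if_neg F42]
    refine ⟨C, hCvh, ?_, ?_, ?_⟩
    · -- properness
      intro e he f hf hef hsh
      obtain ⟨z, hze, hzf⟩ := hsh
      rcases hESdec e he with rfl | he1 | he2 | rfl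
      · rcases hESdec f hf with rfl | hf1 | hf2 | rfl
        · exact absurd rfl hef
        · have hf' := hsh1h f hf1 z hze hzf
          have h2 : C f = y := by rw [hCv1 f hf1, hf']; exact hC1a
          rw [hCvh, h2]; exact hay
        · have hf' := hsh2h f hf2 z hze hzf
          have h2 : C f = x := by rw [hCv2 f hf2, hf']; exact hC2a
          rw [hCvh, h2]; exact hax
        · exact (hshhb z hze hzf).elim
      · rcases hESdec f hf with rfl | hf1 | hf2 | rfl
        · have he' := hsh1h e he1 z hzf hze
          have h2 : C e = y := by rw [hCv1 e he1, he']; exact hC1a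
          rw [h2, hCvh]; exact Ne.symm hay
        · rw [hCv1 e he1, hCv1 f hf1]
          exact hC1prop e he1 f hf1 hef ⟨z, hze, hzf⟩
        · obtain ⟨hE, hF⟩ := hsh12 e he1 f hf2 z hze hzf
          rw [hCv1 e he1, hCv2 f hf2, hE, hF, hC1a, hC2a]
          exact Ne.symm hxy
        · have hσe : σ ib ∈ e := hsh1b e he1 z hze hzf
          rw [hCv1 e he1, hCvb]
          exact hC1y e he1 hσe
      · rcases hESdec f hf with rfl | hf1 | hf2 | rfl
        · have he' := hsh2h e he2 z hzf hze
          have h2 : C e = x := by rw [hCv2 e he2, he']; exact hC2a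
          rw [h2, hCvh]; exact Ne.symm hax
        · obtain ⟨hF, hE⟩ := hsh12 f hf1 e he2 z hzf hze
          rw [hCv2 e he2, hCv1 f hf1, hE, hF, hC2a, hC1a]
          exact hxy
        · rw [hCv2 e he2, hCv2 f hf2]
          exact hC2prop e he2 f hf2 hef ⟨z, hze, hzf⟩
        · have hσe : σ (s + (la : ZMod n)) ∈ e := hsh2b e he2 z hze hzf
          rw [hCv2 e he2, hCvb]
          exact hC2x e he2 hσe
      · rcases hESdec f hf with rfl | hf1 | hf2 | rfl
        · exact (hshhb z hzf hze).elim
        · have hσf : σ ib ∈ f := hsh1b f hf1 z hzf hze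
          rw [hCvb, hCv1 f hf1]
          exact Ne.symm (hC1y f hf1 hσf)
        · have hσf : σ (s + (la : ZMod n)) ∈ f := hsh2b f hf2 z hzf hze
          rw [hCvb, hCv2 f hf2]
          exact Ne.symm (hC2x f hf2 hσf)
        · exact absurd rfl hef
    · -- left boundary condition
      intro e he hσe
      rcases hESdec e he with rfl | he1 | he2 | rfl
      · exfalso
        have hσs1 : σ s ∈ Rset T w1 v := (hσmem1 s).mpr ⟨0, by omega, by simp⟩
        rcases Sym2.mem_iff.mp hσe with h | h
        · exact hv ⟨s, h⟩
        · exact hpnotR (h ▸ hsub1 hσs1)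
      · rw [hCv1 e he1]
        exact hC1x e he1 hσe
      · exfalso
        rcases ES_vertex he2 hσe with h | h
        · obtain ⟨k, hk, hke⟩ := (hσmem2 s).mp h
          rw [add_assoc, ← Nat.cast_add] at hke
          have h0 : (0:ℕ) = la + k := by
            apply hidx s 0 (la + k) (by omega) (by omega)
            rw [← hke]
            simp
          omega
        · exact hv ⟨s, h⟩
      · rw [hCvb]
        exact hax
    · -- right boundary condition
      have hre : s + ((l - 1 : ℕ) : ZMod n) =
          (s + (la : ZMod n)) + ((l - la - 1 : ℕ) : ZMod n) := by
        rw [add_assoc, ← Nat.cast_add]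
        congr 2
        omega
      intro e he hσe
      rcases hESdec e he with rfl | he1 | he2 | rfl
      · exfalso
        have hσr2 : σ (s + ((l - 1 : ℕ) : ZMod n)) ∈ Rset T w2 v := by
          rw [hre]
          exact (hσmem2 _).mpr ⟨l - la - 1, by omega, rfl⟩
        rcases Sym2.mem_iff.mp hσe with h | h
        · exact hv ⟨_, h⟩
        · exact hpnotR (h ▸ hsub2 hσr2)
      · exfalso
        rcases ES_vertex he1 hσe with h | h
        · obtain ⟨k, hk, hke⟩ := (hσmem1 _).mp h
          have := hidx s (l - 1) k (by omega) (by omega) hke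
          omega
        · exact hv ⟨_, h⟩
      · rw [hCv2 e he2]
        rw [hre] at hσe
        exact hC2y e he2 hσe
      · rw [hCvb]
        exact hay

end Main
end HalinAux

open HalinAux in
theorem halin_cubic_three_edge_colorable {V : Type*} [Fintype V] (G : SimpleGraph V)
    (hG : IsHalin G) (hreg : ∀ v : V, (G.neighborSet v).ncard = 3) :
    ∃ C : Sym2 V → Fin 3, IsProperEdgeColoring G C := by
  classical
  obtain ⟨T, n, σ, htree, hle, hdeg2, hn3, hinj, hrange, hcyc, hint⟩ := hG
  haveI : NeZero n := ⟨by omega⟩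
  have hconn : T.Connected := htree.isConnected
  have hac : T.IsAcyclic := htree.IsAcyclic
  have hGcyc : ∀ i : ZMod n, G.Adj (σ i) (σ (i+1)) ∧ ¬ T.Adj (σ i) (σ (i+1)) :=
    fun i => (hcyc _ _).2 ⟨i, Or.inl ⟨rfl, rfl⟩⟩
  have hcyT : ∀ i : ZMod n, ¬ T.Adj (σ i) (σ (i+1)) := fun i => (hGcyc i).2
  have h3 : ∀ w : V, w ∉ Set.range σ → (T.neighborSet w).ncard = 3 := by
    intro w hw
    have hsame : G.neighborSet w = T.neighborSet w := by
      ext u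
      constructor
      · intro hu
        by_cases hT : T.Adj w u
        · exact hT
        · exfalso
          obtain ⟨i, hh⟩ := (hcyc w u).1 ⟨hu, hT⟩
          rcases hh with ⟨h1, _⟩ | ⟨_, h2⟩
          · exact hw ⟨i, h1.symm⟩
          · exact hw ⟨i + 1, h2.symm⟩
      · intro hu
        exact hle hu
    rw [← hsame]
    exact hreg w
  -- basic arithmetic facts
  have hone : ((1 : ℕ) : ZMod n) ≠ 0 := by
    intro h
    have := zmod_cast_inj (n := n) (a := 1) (b := 0) (by omega) (by omega)
      (by rw [h, Nat.cast_zero])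
    omega
  have htwo : ((2 : ℕ) : ZMod n) ≠ 0 := by
    intro h
    have := zmod_cast_inj (n := n) (a := 2) (b := 0) (by omega) (by omega)
      (by rw [h, Nat.cast_zero])
    omega
  have hσne1 : ∀ i : ZMod n, σ i ≠ σ (i + 1) := by
    intro i h
    have h2 := hinj h
    rw [left_eq_add] at h2
    exact hone (by rw [Nat.cast_one]; exact h2)
  have hcyEinj : ∀ i j : ZMod n, cyE σ i = cyE σ j → i = j := by
    intro i j h
    rcases Sym2.eq_iff.mp h with ⟨h1, _⟩ | ⟨h1, h2⟩
    · exact hinj h1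
    · exfalso
      have e1 := hinj h1
      have e2 := hinj h2
      rw [e1] at e2
      have : j = j + ((2:ℕ) : ZMod n) := by
        conv_lhs => rw [← e2]
        push_cast
        ring
      rw [left_eq_add] at this
      exact htwo this
  -- select a root leaf σ 0 with its unique tree neighbour r
  obtain ⟨r, hr⟩ : ∃ r, T.neighborSet (σ 0) = {r} := by
    apply Set.ncard_eq_one.mp
    have : σ 0 ∈ Set.range σ := Set.mem_range_self 0
    rw [hrange] at this
    exact this
  have hadj0 : T.Adj (σ 0) r := by
    have : r ∈ T.neighborSet (σ 0) := by rw [hr]; exact rfl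
    exact this
  have hedge : T.Adj r (σ 0) := hadj0.symm
  have hR0 : Rset T (σ 0) r = {σ 0} := Rset_leaf hr
  have hcov := Rset_cover hconn hedge
  have hnotR : σ 0 ∉ Rset T r (σ 0) := by
    intro h
    exact Rset_disjoint hac hedge (σ 0) h (mem_Rset_self T (σ 0) r)
  have hmemR : ∀ z : V, z ≠ σ 0 → z ∈ Rset T r (σ 0) := by
    intro z hz
    rcases hcov z with h | h
    · exact h
    · rw [hR0, mem_singleton_iff] at h
      exact absurd h hz
  -- the leaf set of the subtree at r is all indices except 0
  have hLrw : Lset T σ r (σ 0) = Itv n 1 (n - 1) := by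
    ext j
    constructor
    · intro hj
      have hj0 : j ≠ 0 := by
        rintro rfl
        exact hnotR hj
      refine ⟨(j - 1).val, ?_, ?_⟩
      · have hlt : (j - 1).val < n := ZMod.val_lt _
        have hne : (j - 1).val ≠ n - 1 := by
          intro h
          apply hj0
          have h1 : j - 1 = ((n - 1 : ℕ) : ZMod n) := by rw [← h, zmod_val_cast_back]
          have h2 : j = 1 + ((n - 1 : ℕ) : ZMod n) := by rw [← h1]; ring
          rw [h2]
          have h3 : (1 : ZMod n) + ((n - 1 : ℕ) : ZMod n) = ((n : ℕ) : ZMod n) := by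
            rw [← Nat.cast_one, ← Nat.cast_add]
            congr 1
            omega
          rw [h3, ZMod.natCast_self]
        omega
      · rw [zmod_val_cast_back]; ring
    · rintro ⟨k, hk, rfl⟩
      apply hmemR
      intro h
      apply hinj at h
      have : ((1 + k : ℕ) : ZMod n) = ((0 : ℕ) : ZMod n) := by
        push_cast
        rw [← h]
      have := zmod_cast_inj (n := n) (a := 1 + k) (b := 0) (by omega) (by omega) this
      omega
  have main := main_claim hac hconn hn3 hinj hrange h3 hcyT hint (n - 1) r (σ 0) hedge 1
    hLrw le_rfl 0 1 2 (by decide) (by decide) (by decide)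
  obtain ⟨C0, hC0a, hC0prop, hC0x, hC0y⟩ := main
  -- the two remaining cycle edges
  set k0 : ZMod n := ((n - 1 : ℕ) : ZMod n) with hk0
  have hm2 : k0 + 1 = 0 := by
    rw [hk0]
    have h0 : ((n - 1 : ℕ) : ZMod n) + 1 = ((n : ℕ) : ZMod n) := by
      have : ((n : ℕ) : ZMod n) = ((n - 1 + 1 : ℕ) : ZMod n) := by congr 1; omega
      rw [this, Nat.cast_add, Nat.cast_one]
    rw [h0, ZMod.natCast_self]
  have hm1 : (1 : ZMod n) + ((n - 1 - 1 : ℕ) : ZMod n) = k0 := by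
    have h0 : ((n - 1 : ℕ) : ZMod n) = ((1 + (n - 1 - 1) : ℕ) : ZMod n) := by congr 1; omega
    rw [hk0, h0, Nat.cast_add, Nat.cast_one]
  have hk00 : k0 ≠ 0 := by
    intro h
    have := zmod_cast_inj (n := n) (a := n - 1) (b := 0) (by omega) (by omega)
      (by rw [← hk0, h, Nat.cast_zero])
    omega
  -- σ 0 only appears in the head edge of ES
  have h0Lset : (0 : ZMod n) ∉ Lset T σ r (σ 0) := hnotR
  have hhead0 : ∀ e ∈ ES T σ r (σ 0), σ 0 ∈ e → e = s(r, σ 0) := by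
    intro e he hσe
    rcases he with he | ⟨_, hsub⟩ | ⟨j, hj, hj1, rfl⟩
    · exact he
    · exact absurd (hsub _ hσe) hnotR
    · exfalso
      rcases Sym2.mem_iff.mp hσe with h | h
      · rw [← hinj h] at hj
        exact h0Lset hj
      · rw [← hinj h] at hj1
        exact h0Lset hj1
  have hcb0ES : cyE σ 0 ∉ ES T σ r (σ 0) := by
    intro hmem
    rcases hmem with he | ⟨heT, _⟩ | ⟨j, hj, hj1, hje⟩
    · rcases Sym2.eq_iff.mp he with ⟨h1, h2⟩ | ⟨h1, h2⟩
      · exact hσne1 0 h2.symm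
      · rw [← h2] at hadj0
        exact hcyT 0 hadj0
    · exact hcyT 0 heT
    · rw [← hcyEinj _ _ hje] at hj
      exact h0Lset hj
  have hcbkES : cyE σ k0 ∉ ES T σ r (σ 0) := by
    intro hmem
    rcases hmem with he | ⟨heT, _⟩ | ⟨j, hj, hj1, hje⟩
    · rcases Sym2.eq_iff.mp he with ⟨h1, h2⟩ | ⟨h1, h2⟩
      · rw [← h1] at hadj0
        apply hcyT k0
        rw [hm2]
        exact hadj0.symm
      · exact hk00 (hinj h1)
    · exact hcyT k0 heT
    · rw [← hcyEinj _ _ hje, hm2] at hj1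
      exact h0Lset hj1
  have hne0k : cyE σ 0 ≠ cyE σ k0 := fun h => hk00 (hcyEinj _ _ h).symm
  -- final colouring
  set C : Sym2 V → Fin 3 := fun e =>
    if e = cyE σ 0 then 1 else if e = cyE σ k0 then 2 else C0 e with hCdef
  have hCk : C (cyE σ 0) = 1 := by rw [hCdef]; simp
  have hCk2 : C (cyE σ k0) = 2 := by
    rw [hCdef]
    simp only [if_neg (Ne.symm hne0k), if_pos rfl]
    simp
  have hC0v : ∀ e ∈ ES T σ r (σ 0), C e = C0 e := by
    intro e he
    have h1 : e ≠ cyE σ 0 := fun h => hcb0ES (h ▸ he)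
    have h2 : e ≠ cyE σ k0 := fun h => hcbkES (h ▸ he)
    rw [hCdef]
    simp only [if_neg h1, if_neg h2]
  -- shared-vertex analysis at the two special edges
  have hsh0 : ∀ e ∈ ES T σ r (σ 0), ∀ z, z ∈ cyE σ 0 → z ∈ e → C0 e ≠ 1 := by
    intro e he z hz hze
    rcases Sym2.mem_iff.mp hz with rfl | rfl
    · rw [hhead0 e he hze, hC0a]
      decide
    · rw [zero_add] at hze
      exact hC0x e he hze
  have hshk : ∀ e ∈ ES T σ r (σ 0), ∀ z, z ∈ cyE σ k0 → z ∈ e → C0 e ≠ 2 := by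
    intro e he z hz hze
    rcases Sym2.mem_iff.mp hz with rfl | rfl
    · exact hC0y e he (by rw [hm1]; exact hze)
    · rw [hm2] at hze
      rw [hhead0 e he hze, hC0a]
      decide
  -- decomposition of the edges of G
  have hGdec : ∀ e ∈ G.edgeSet, e = cyE σ 0 ∨ e = cyE σ k0 ∨ e ∈ ES T σ r (σ 0) := by
    intro e he
    induction e with
    | h e1 e2 =>
      have hadjG : G.Adj e1 e2 := he
      by_cases hT : T.Adj e1 e2
      · right; right
        by_cases h1 : e1 = σ 0
        · subst h1
          have he2 : e2 ∈ T.neighborSet (σ 0) := hT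
          rw [hr, mem_singleton_iff] at he2
          subst he2
          exact Or.inl Sym2.eq_swap
        · by_cases h2 : e2 = σ 0
          · subst h2
            have he1 : e1 ∈ T.neighborSet (σ 0) := hT.symm
            rw [hr, mem_singleton_iff] at he1
            subst he1
            exact Or.inl rfl
          · refine Or.inr (Or.inl ⟨hT, ?_⟩)
            intro z hz
            rcases Sym2.mem_iff.mp hz with rfl | rfl
            · exact hmemR _ h1
            · exact hmemR _ h2
      · obtain ⟨i, hcase⟩ := (hcyc e1 e2).1 ⟨hadjG, hT⟩
        have he' : s(e1, e2) = cyE σ i := by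
          rcases hcase with ⟨rfl, rfl⟩ | ⟨rfl, rfl⟩
          · rfl
          · exact Sym2.eq_swap
        rw [he']
        by_cases hi0 : i = 0
        · subst hi0
          exact Or.inl rfl
        · by_cases hik : i = k0
          · subst hik
            exact Or.inr (Or.inl rfl)
          · refine Or.inr (Or.inr (Or.inr (Or.inr ⟨i, ?_, ?_, rfl⟩)))
            · exact hmemR _ (fun h => hi0 (hinj h))
            · refine hmemR _ (fun h => hik ?_)
              have h1 : i + 1 = 0 := hinj h
              have h2 : i = -1 := eq_neg_of_add_eq_zero_left h1
              have h3 : k0 = -1 := eq_neg_of_add_eq_zero_left hm2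
              rw [h2, h3]
  -- conclusion
  refine ⟨C, ?_⟩
  intro e he f hf hef hsh
  obtain ⟨z, hze, hzf⟩ := hsh
  rcases hGdec e he with rfl | rfl | heE
  · rcases hGdec f hf with rfl | rfl | hfE
    · exact absurd rfl hef
    · rw [hCk, hCk2]
      decide
    · rw [hCk, hC0v f hfE]
      exact Ne.symm (hsh0 f hfE z hze hzf)
  · rcases hGdec f hf with rfl | rfl | hfE
    · rw [hCk2, hCk]
      decide
    · exact absurd rfl hef
    · rw [hCk2, hC0v f hfE]
      exact Ne.symm (hshk f hfE z hze hzf)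
  · rcases hGdec f hf with rfl | rfl | hfE
    · rw [hC0v e heE, hCk]
      exact hsh0 e heE z hzf hze
    · rw [hC0v e heE, hCk2]
      exact hshk e heE z hzf hze
    · rw [hC0v e heE, hC0v f hfE]
      exact hC0prop e heE f hfE hef ⟨z, hze, hzf⟩
end

section
/- Let G be a Halin graph with a list assignment L on its edges such that for each edge vw the list L(vw) has size at least max(deg(v), deg(w), 4). Then G has a proper edge colouring from the lists. -/
open SimpleGraph

namespace HalinAux

set_option linter.unusedSectionVars false

noncomputable def pick (s : Finset ℕ) : ℕ := if h : s.Nonempty then h.choose else 0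

lemma pick_mem {s : Finset ℕ} (h : s.Nonempty) : pick s ∈ s := by
  rw [pick, dif_pos h]; exact h.choose_spec

lemma sdiff_pair_nonempty {s : Finset ℕ} {a b : ℕ} (h : 3 ≤ s.card) : (s \ {a, b}).Nonempty := by
  rw [← Finset.card_pos]
  have h1 := Finset.card_le_card_sdiff_add_card (s := s) (t := ({a, b} : Finset ℕ))
  have h2 : ({a, b} : Finset ℕ).card ≤ 2 := Finset.card_insert_le _ _ |>.trans (by simp)
  omega

lemma sdiff_single_nonempty {s : Finset ℕ} {a b : ℕ} (hab : a = b) (h : 2 ≤ s.card) :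
    (s \ {a, b}).Nonempty := by
  subst hab
  rw [← Finset.card_pos]
  have h1 := Finset.card_le_card_sdiff_add_card (s := s) (t := ({a, a} : Finset ℕ))
  have h2 : ({a, a} : Finset ℕ).card = 1 := by simp
  omega

lemma cycle_color {n : ℕ} (hn : 3 ≤ n) (R : ZMod n → Finset ℕ) (h2 : ∀ i, 2 ≤ (R i).card)
    (i0 : ZMod n) (γ : ℕ) (hγ : γ ∈ R (i0+1)) (hlast : 3 ≤ (R i0).card ∨ γ ∉ R i0) :
    ∃ c : ZMod n → ℕ, (∀ i, c i ∈ R i) ∧ ∀ i, c i ≠ c (i+1) := by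
  haveI : NeZero n := ⟨by omega⟩
  set f : ℕ → ℕ := fun j => Nat.rec γ
    (fun j fj => pick ((R (i0 + 1 + ((j+1 : ℕ) : ZMod n))) \ (if j + 2 = n then {fj, γ} else {fj, fj}))) j with hf
  have hcast : (i0 + 1 + ((n - 1 : ℕ) : ZMod n)) = i0 := by
    have h : ((n - 1 : ℕ) : ZMod n) = (n : ZMod n) - 1 := by
      rw [Nat.cast_sub (by omega)]; simp
    rw [h, ZMod.natCast_self]; ring
  have hfstep : ∀ j : ℕ, f (j+1) = pick ((R (i0 + 1 + ((j+1 : ℕ) : ZMod n))) \ (if j + 2 = n then {f j, γ} else {f j, f j})) := fun j => rfl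
  have hne : ∀ j : ℕ, ((R (i0 + 1 + ((j+1 : ℕ) : ZMod n))) \ (if j + 2 = n then {f j, γ} else {f j, f j})).Nonempty := by
    intro j
    by_cases hj : j + 2 = n
    · rw [if_pos hj]
      have hcast2 : (i0 + 1 + ((j+1 : ℕ) : ZMod n)) = i0 := by
        have h : j + 1 = n - 1 := by omega
        rw [h]; exact hcast
      rw [hcast2]
      rcases hlast with h3 | hγ'
      · exact sdiff_pair_nonempty h3
      · have he : R i0 \ {f j, γ} = R i0 \ {f j, f j} := by
          ext x
          simp only [Finset.mem_sdiff, Finset.mem_insert, Finset.mem_singleton]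
          constructor
          · rintro ⟨hx, hx2⟩
            exact ⟨hx, fun h' => hx2 (by tauto)⟩
          · rintro ⟨hx, hx2⟩
            refine ⟨hx, ?_⟩
            rintro (rfl | rfl)
            · exact hx2 (Or.inl rfl)
            · exact hγ' hx
        rw [he]
        exact sdiff_single_nonempty rfl (h2 _)
    · rw [if_neg hj]
      exact sdiff_single_nonempty rfl (h2 _)
  have hmem : ∀ j : ℕ, f (j+1) ∈ (R (i0 + 1 + ((j+1 : ℕ) : ZMod n))) \ (if j + 2 = n then {f j, γ} else {f j, f j}) := by
    intro j; rw [hfstep]; exact pick_mem (hne j)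
  have P1 : ∀ j : ℕ, f j ∈ R (i0 + 1 + (j : ZMod n)) := by
    intro j
    cases j with
    | zero => have h0 : f 0 = γ := rfl; simpa [h0] using hγ
    | succ j => exact (Finset.mem_sdiff.1 (hmem j)).1
  have P2 : ∀ j : ℕ, f (j+1) ≠ f j := by
    intro j
    have h := (Finset.mem_sdiff.1 (hmem j)).2
    by_cases hj : j + 2 = n
    · rw [if_pos hj] at h; simp only [Finset.mem_insert, Finset.mem_singleton] at h; tauto
    · rw [if_neg hj] at h; simp only [Finset.mem_insert, Finset.mem_singleton] at h; tauto
  have P3 : f (n-1) ≠ γ := by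
    have h1 : n - 1 = (n-2) + 1 := by omega
    have h := (Finset.mem_sdiff.1 (hmem (n-2))).2
    rw [if_pos (by omega)] at h
    simp only [Finset.mem_insert, Finset.mem_singleton] at h
    rw [h1]; tauto
  refine ⟨fun i => f ((i - (i0+1)).val), fun i => ?_, fun i => ?_⟩
  · have h := P1 ((i - (i0+1)).val)
    have hc : ((((i - (i0+1)).val : ℕ)) : ZMod n) = i - (i0+1) :=
      (ZMod.natCast_val _).trans (ZMod.cast_id _ _)
    rw [hc] at h
    have : i0 + 1 + (i - (i0 + 1)) = i := by ring
    rwa [this] at h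
  · set j := (i - (i0+1)).val with hjdef
    have hjn : j < n := ZMod.val_lt _
    have hc : ((j : ℕ) : ZMod n) = i - (i0+1) :=
      (ZMod.natCast_val _).trans (ZMod.cast_id _ _)
    by_cases hj : j = n - 1
    · -- i = i0, i + 1 = i0 + 1
      have hi : i = i0 := by
        have : i = i0 + 1 + ((j : ℕ) : ZMod n) := by rw [hc]; ring
        rw [this, hj]; exact hcast
      have hval : ((i + 1) - (i0+1)).val = 0 := by
        rw [hi]; simp
      show f j ≠ f (((i + 1) - (i0+1)).val)
      rw [hval, hj]
      exact P3
    · have hstep : ((i+1) - (i0+1)) = ((j+1 : ℕ) : ZMod n) := by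
        push_cast
        rw [hc]; ring
      have hval : ((i + 1) - (i0+1)).val = j + 1 := by
        rw [hstep, ZMod.val_natCast_of_lt (by omega)]
      show f j ≠ f (((i + 1) - (i0+1)).val)
      rw [hval]
      exact (P2 j).symm


lemma cycle_color_of_big {n : ℕ} (hn : 3 ≤ n) (R : ZMod n → Finset ℕ) (h2 : ∀ i, 2 ≤ (R i).card)
    (i0 : ZMod n) (h3 : 3 ≤ (R i0).card) :
    ∃ c : ZMod n → ℕ, (∀ i, c i ∈ R i) ∧ ∀ i, c i ≠ c (i+1) := by
  obtain ⟨γ, hγ⟩ := Finset.card_pos.mp (lt_of_lt_of_le (by norm_num) (h2 (i0+1)))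
  exact cycle_color hn R h2 i0 γ hγ (Or.inl h3)

lemma cycle_color_of_ne {n : ℕ} (hn : 3 ≤ n) (R : ZMod n → Finset ℕ) (h2 : ∀ i, 2 ≤ (R i).card)
    (i0 : ZMod n) (hne : R i0 ≠ R (i0+1)) :
    ∃ c : ZMod n → ℕ, (∀ i, c i ∈ R i) ∧ ∀ i, c i ≠ c (i+1) := by
  by_cases hsub : (R (i0+1) \ R i0).Nonempty
  · obtain ⟨γ, hγ⟩ := hsub
    rw [Finset.mem_sdiff] at hγ
    exact cycle_color hn R h2 i0 γ hγ.1 (Or.inr hγ.2)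
  · have hsub' : R (i0+1) ⊆ R i0 := by
      intro x hx
      by_contra hx'
      exact hsub ⟨x, Finset.mem_sdiff.2 ⟨hx, hx'⟩⟩
    by_cases h3 : 3 ≤ (R i0).card
    · exact cycle_color_of_big hn R h2 i0 h3
    · have : R (i0+1) = R i0 :=
        Finset.eq_of_subset_of_card_le hsub' (by have := h2 (i0+1); omega)
      exact absurd this.symm hne

lemma cycle_fail_structure {n : ℕ} (hn : 3 ≤ n) (R : ZMod n → Finset ℕ)
    (h2 : ∀ i, 2 ≤ (R i).card)
    (hfail : ¬ ∃ c : ZMod n → ℕ, (∀ i, c i ∈ R i) ∧ ∀ i, c i ≠ c (i+1)) :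
    ∃ x y : ℕ, x ≠ y ∧ ∀ i, R i = {x, y} := by
  haveI : NeZero n := ⟨by omega⟩
  have hconst : ∀ i, R i = R (i + 1) := by
    intro i
    by_contra hne
    exact hfail (cycle_color_of_ne hn R h2 i hne)
  have hstep : ∀ (k : ℕ) (i : ZMod n), R i = R (i + k) := by
    intro k
    induction k with
    | zero => simp
    | succ k ih =>
      intro i
      have := ih (i + 1)
      rw [← hconst i] at this
      rw [this]; push_cast; ring_nf
  have hall : ∀ i, R i = R 0 := by
    intro i
    have h := hstep i.val 0
    have hc : ((i.val : ℕ) : ZMod n) = i := (ZMod.natCast_val _).trans (ZMod.cast_id _ _)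
    rw [zero_add, hc] at h
    exact h.symm
  have hcard : (R 0).card = 2 := by
    by_contra h
    have h3 : 3 ≤ (R 0).card := by have := h2 0; omega
    exact hfail (cycle_color_of_big hn R h2 0 h3)
  obtain ⟨x, y, hxy, hR⟩ := Finset.card_eq_two.1 hcard
  exact ⟨x, y, hxy, fun i => (hall i).trans hR⟩


variable {V : Type*} [DecidableEq V] {F : SimpleGraph V}

lemma acyclic_anti (h : F.IsAcyclic) {H : SimpleGraph V} (hle : H ≤ F) : H.IsAcyclic :=
  fun _v c hc => h (c.mapLe hle) ((Walk.mapLe_isCycle hle).2 hc)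

/-- In an acyclic graph, after deleting an edge its endpoints are no longer reachable. -/
lemma no_reach_delete (hF : F.IsAcyclic) {a b : V} (hab : F.Adj a b) :
    ¬ (F.deleteEdges {s(a,b)}).Reachable a b := by
  intro hr
  obtain ⟨w⟩ := hr
  have hp := w.toPath
  set p : (F.deleteEdges {s(a,b)}).Walk a b := hp.1 with hpdef
  have hpath : p.IsPath := hp.2
  have hedges : ∀ e ∈ p.edges, e ∈ F.edgeSet := by
    intro e he
    have := p.edges_subset_edgeSet he
    rw [edgeSet_deleteEdges] at this
    exact this.1
  have hnot : s(a,b) ∉ p.edges := by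
    intro hmem
    have := p.edges_subset_edgeSet hmem
    rw [edgeSet_deleteEdges] at this
    exact this.2 rfl
  set q : F.Walk a b := p.transfer F hedges with hq
  have hqpath : q.IsPath := hpath.transfer _
  have hqe : s(b,a) ∉ q.edges := by
    rw [hq, Walk.edges_transfer]
    rw [show s(b,a) = s(a,b) from Sym2.eq_swap]
    exact hnot
  exact hF _ (Path.cons_isCycle ⟨q, hqpath⟩ hab.symm hqe)

/-- A path from `c` avoiding the deleted edge `ac` can be chosen to avoid the vertex `a`. -/
lemma avoid_path (hF : F.IsAcyclic) {a c y : V} (hac : F.Adj a c)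
    (hr : (F.deleteEdges {s(a,c)}).Reachable c y) :
    ∃ p : (F.deleteEdges {s(a,c)}).Walk c y, p.IsPath ∧ a ∉ p.support := by
  obtain ⟨w⟩ := hr
  refine ⟨w.toPath.1, w.toPath.2, fun hmem => ?_⟩
  have hca : (F.deleteEdges {s(a,c)}).Reachable c a := ⟨(w.toPath.1).takeUntil a hmem⟩
  exact no_reach_delete hF hac hca.symm

lemma subset_reach (hF : F.IsAcyclic) {b c d y : V} (hbc : F.Adj b c) (hcd : F.Adj c d)
    (hdb : d ≠ b) (hr : (F.deleteEdges {s(c,d)}).Reachable d y) :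
    (F.deleteEdges {s(b,c)}).Reachable c y := by
  obtain ⟨p, hpath, hcsup⟩ := avoid_path hF hcd hr
  have hedges : ∀ e ∈ p.edges, e ∈ (F.deleteEdges {s(b,c)}).edgeSet := by
    intro e he
    have h1 := p.edges_subset_edgeSet he
    rw [edgeSet_deleteEdges] at h1 ⊢
    refine ⟨h1.1, fun hbc' => ?_⟩
    rw [Set.mem_singleton_iff] at hbc'
    subst hbc'
    exact hcsup (p.snd_mem_support_of_mem_edges he)
  have hadj : (F.deleteEdges {s(b,c)}).Adj c d := by
    rw [deleteEdges_adj]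
    refine ⟨hcd, fun h => ?_⟩
    rw [Set.mem_singleton_iff, Sym2.eq_iff] at h
    rcases h with ⟨h1, h2⟩ | ⟨h1, h2⟩
    · exact hbc.ne h1.symm
    · exact hdb h2
  exact ⟨Walk.cons hadj (p.transfer _ hedges)⟩

lemma disjoint_reach (hF : F.IsAcyclic) {a c c' y : V} (hac : F.Adj a c) (hac' : F.Adj a c')
    (hcc' : c ≠ c') (h1 : (F.deleteEdges {s(a,c)}).Reachable c y)
    (h2 : (F.deleteEdges {s(a,c')}).Reachable c' y) : False := by
  obtain ⟨p, hp, hap⟩ := avoid_path hF hac h1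
  obtain ⟨p', hp', hap'⟩ := avoid_path hF hac' h2
  have hedges : ∀ e ∈ p.edges, e ∈ F.edgeSet := fun e he => by
    have := p.edges_subset_edgeSet he; rw [edgeSet_deleteEdges] at this; exact this.1
  have hedges' : ∀ e ∈ p'.edges, e ∈ F.edgeSet := fun e he => by
    have := p'.edges_subset_edgeSet he; rw [edgeSet_deleteEdges] at this; exact this.1
  set q : F.Walk c y := p.transfer F hedges with hqdef
  set q' : F.Walk c' y := p'.transfer F hedges' with hqdef'
  have haq : a ∉ q.support := by rw [hqdef, Walk.support_transfer]; exact hap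
  have haq' : a ∉ q'.support := by rw [hqdef', Walk.support_transfer]; exact hap'
  have hw1 : (Walk.cons hac q).IsPath := (hp.transfer _).cons haq
  have hw2 : (Walk.cons hac' q').IsPath := (hp'.transfer _).cons haq'
  have := hF.path_unique ⟨Walk.cons hac q, hw1⟩ ⟨Walk.cons hac' q', hw2⟩
  have hsup : (Walk.cons hac q).support = (Walk.cons hac' q').support := by
    rw [Subtype.ext_iff] at this
    exact congrArg Walk.support this
  rw [Walk.support_cons, Walk.support_cons, q.support_eq_cons, q'.support_eq_cons] at hsup
  simp only [List.cons.injEq] at hsup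
  exact hcc' hsup.2.1

lemma first_step {a b x : V} (hab : F.Adj a b) (hr : (F.deleteEdges {s(a,b)}).Reachable a x)
    (hxa : x ≠ a) : ∃ c, F.Adj a c ∧ c ≠ b ∧ (F.deleteEdges {s(a,c)}).Reachable c x := by
  obtain ⟨w⟩ := hr
  obtain ⟨p, hpath⟩ := w.toPath
  cases p with
  | nil => exact absurd rfl hxa
  | cons h q =>
    rename_i c
    have hadj : F.Adj a c ∧ s(a,c) ∉ ({s(a,b)} : Set (Sym2 V)) := by
      rw [← deleteEdges_adj]; exact h
    have hcb : c ≠ b := by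
      intro hcb; subst hcb
      exact hadj.2 rfl
    have hqp : q.IsPath := hpath.of_cons
    have hqa : a ∉ q.support := by
      have hnd := hpath.support_nodup
      rw [Walk.support_cons] at hnd
      exact (List.nodup_cons.1 hnd).1
    have hedges : ∀ e ∈ q.edges, e ∈ (F.deleteEdges {s(a,c)}).edgeSet := by
      intro e he
      have h1 := q.edges_subset_edgeSet he
      rw [edgeSet_deleteEdges] at h1 ⊢
      refine ⟨h1.1, fun hh => ?_⟩
      rw [Set.mem_singleton_iff] at hh
      subst hh
      exact hqa (q.fst_mem_support_of_mem_edges he)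
    exact ⟨c, hadj.1, hcb, ⟨q.transfer _ hedges⟩⟩


lemma pendant_aux [Fintype V] (hF : F.IsAcyclic) :
    ∀ (m : ℕ) (b c : V), F.Adj b c →
    ({y | (F.deleteEdges {s(b,c)}).Reachable c y}).ncard ≤ m →
    ∃ x, (F.deleteEdges {s(b,c)}).Reachable c x ∧ (F.neighborSet x).ncard = 1 := by
  intro m
  induction m with
  | zero =>
    intro b c hbc hm
    exfalso
    have hpos : 0 < ({y | (F.deleteEdges {s(b,c)}).Reachable c y}).ncard := by
      rw [Set.ncard_pos (Set.toFinite _)]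
      exact ⟨c, Reachable.refl c⟩
    omega
  | succ m ih =>
    intro b c hbc hm
    by_cases hc : (F.neighborSet c).ncard = 1
    · exact ⟨c, Reachable.refl c, hc⟩
    · have hb : b ∈ F.neighborSet c := hbc.symm
      have h2 : 1 < (F.neighborSet c).ncard := by
        have h1 : 0 < (F.neighborSet c).ncard := by
          rw [Set.ncard_pos (Set.toFinite _)]; exact ⟨b, hb⟩
        omega
      obtain ⟨u, v, hu, hv, huv⟩ := (Set.one_lt_ncard_iff (Set.toFinite _)).1 h2
      have hd : ∃ d, d ∈ F.neighborSet c ∧ d ≠ b := by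
        by_cases hub : u = b
        · exact ⟨v, hv, fun h => huv (hub.trans h.symm)⟩
        · exact ⟨u, hu, hub⟩
      obtain ⟨d, hd, hdb⟩ := hd
      have hcd : F.Adj c d := hd
      have hsub : {y | (F.deleteEdges {s(c,d)}).Reachable d y} ⊆
          {y | (F.deleteEdges {s(b,c)}).Reachable c y} := by
        intro y hy
        exact subset_reach hF hbc hcd hdb hy
      have hcs : c ∉ {y | (F.deleteEdges {s(c,d)}).Reachable d y} := by
        intro hcy
        exact no_reach_delete hF hcd (Reachable.symm hcy)
      have hss : {y | (F.deleteEdges {s(c,d)}).Reachable d y} ⊂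
          {y | (F.deleteEdges {s(b,c)}).Reachable c y} :=
        ⟨hsub, fun habs => hcs (habs (by exact Reachable.refl c))⟩
      have hlt := Set.ncard_lt_ncard hss (Set.toFinite _)
      obtain ⟨x, hx, hleaf⟩ := ih c d hcd (by omega)
      exact ⟨x, subset_reach hF hbc hcd hdb hx, hleaf⟩

lemma pendant [Fintype V] (hF : F.IsAcyclic) {b c : V} (hbc : F.Adj b c) :
    ∃ x, (F.deleteEdges {s(b,c)}).Reachable c x ∧ (F.neighborSet x).ncard = 1 :=
  pendant_aux hF _ b c hbc le_rfl

lemma forest_coloring [Fintype V] :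
    ∀ (m : ℕ) (F : SimpleGraph V), F.IsAcyclic → F.edgeSet.ncard ≤ m →
    ∀ (L : Sym2 V → Finset ℕ),
    (∀ u v, F.Adj u v → (F.neighborSet u).ncard ≤ (L s(u,v)).card) →
    ∃ c : Sym2 V → ℕ, (∀ e ∈ F.edgeSet, c e ∈ L e) ∧
      (∀ e ∈ F.edgeSet, ∀ f ∈ F.edgeSet, e ≠ f → (∃ v, v ∈ e ∧ v ∈ f) → c e ≠ c f) := by
  intro m
  induction m with
  | zero =>
    intro F hF hm L hL
    have : F.edgeSet = ∅ := by
      rw [← Set.ncard_eq_zero (Set.toFinite _)]; omega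
    refine ⟨fun _ => 0, ?_, ?_⟩ <;> simp [this]
  | succ m ih =>
    intro F hF hm L hL
    by_cases hne : F.edgeSet = ∅
    · refine ⟨fun _ => 0, ?_, ?_⟩ <;> simp [hne]
    · obtain ⟨e, he⟩ := Set.nonempty_iff_ne_empty.2 hne
      induction e using Sym2.ind with
      | _ b₀ c₀ =>
      have hbc : F.Adj b₀ c₀ := he
      obtain ⟨x, _, hleaf⟩ := pendant hF hbc
      obtain ⟨q, hq⟩ := Set.ncard_eq_one.1 hleaf
      have hqx : F.Adj x q := by
        have : q ∈ F.neighborSet x := by rw [hq]; exact rfl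
        exact this
      set e0 : Sym2 V := s(x, q) with he0
      set F' := F.deleteEdges {e0} with hF'
      have hF'le : F' ≤ F := deleteEdges_le _
      have hF'acyc : F'.IsAcyclic := acyclic_anti hF hF'le
      have hF'edge : F'.edgeSet = F.edgeSet \ {e0} := edgeSet_deleteEdges _
      have he0mem : e0 ∈ F.edgeSet := hqx
      have hcard : F'.edgeSet.ncard ≤ m := by
        rw [hF'edge]
        have := Set.ncard_diff_singleton_lt_of_mem he0mem (Set.toFinite _)
        omega
      have hL' : ∀ u v, F'.Adj u v → (F'.neighborSet u).ncard ≤ (L s(u,v)).card := by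
        intro u v huv
        have h1 : F'.neighborSet u ⊆ F.neighborSet u := fun w hw => hF'le hw
        have h2 := Set.ncard_le_ncard h1 (Set.toFinite _)
        exact h2.trans (hL u v (hF'le huv))
      obtain ⟨c', hc'mem, hc'prop⟩ := ih F' hF'acyc hcard L hL'
      -- the set of colours used on F'-edges at q
      set used : Finset ℕ := ((Set.toFinite (F'.neighborSet q)).toFinset).image
        (fun w => c' s(q, w)) with hused
      have h3 : F'.neighborSet q = F.neighborSet q \ {x} := by
        ext w
        constructor
        · intro hw
          rw [hF', mem_neighborSet, deleteEdges_adj] at hw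
          refine ⟨hw.1, fun hwx => hw.2 ?_⟩
          rw [Set.mem_singleton_iff] at hwx ⊢
          subst hwx
          rw [he0, Sym2.eq_swap]
        · rintro ⟨hadj, hwx⟩
          rw [Set.mem_singleton_iff] at hwx
          rw [mem_neighborSet, hF', deleteEdges_adj]
          refine ⟨hadj, fun heq => ?_⟩
          rw [Set.mem_singleton_iff, he0, Sym2.eq_iff] at heq
          rcases heq with ⟨h1, _⟩ | ⟨_, h2⟩
          · exact hqx.ne h1.symm
          · exact hwx h2
      have husedcard : used.card + 1 ≤ (F.neighborSet q).ncard := by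
        have h1 : used.card ≤ ((Set.toFinite (F'.neighborSet q)).toFinset).card :=
          Finset.card_image_le
        have h2 : ((Set.toFinite (F'.neighborSet q)).toFinset).card = (F'.neighborSet q).ncard :=
          (Set.ncard_eq_toFinset_card _ _).symm
        have h4 : (F'.neighborSet q).ncard = (F.neighborSet q).ncard - 1 := by
          rw [h3]
          exact Set.ncard_diff_singleton_of_mem hqx.symm
        have h5 : 0 < (F.neighborSet q).ncard := by
          rw [Set.ncard_pos (Set.toFinite _)]
          exact ⟨x, hqx.symm⟩
        omega
      have hdegq : (F.neighborSet q).ncard ≤ (L e0).card := by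
        have := hL q x hqx.symm
        rwa [show s(q,x) = e0 from by rw [he0, Sym2.eq_swap]] at this
      have hAne : ((L e0) \ used).Nonempty := by
        rw [← Finset.card_pos]
        have h1 := Finset.card_le_card_sdiff_add_card (s := L e0) (t := used)
        omega
      set a := pick ((L e0) \ used) with ha
      have hamem : a ∈ L e0 ∧ a ∉ used := by
        have := pick_mem hAne
        rw [← ha, Finset.mem_sdiff] at this
        exact this
      set cc : Sym2 V → ℕ := fun e => if e = e0 then a else c' e with hcc
      have key : ∀ f, f ∈ F.edgeSet → f ≠ e0 → (∃ v, v ∈ e0 ∧ v ∈ f) → c' f ≠ a := by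
        intro f hf hfne hshare
        obtain ⟨v, hv0, hvf⟩ := hshare
        induction f using Sym2.ind with
        | _ u₁ u₂ =>
        have hadj : F.Adj u₁ u₂ := hf
        rw [he0, Sym2.mem_iff] at hv0
        rw [Sym2.mem_iff] at hvf
        -- helper: an F-edge containing x must be e0
        have hxedge : ∀ w₁ w₂, F.Adj w₁ w₂ → w₁ = x → s(w₁, w₂) = e0 := by
          intro w₁ w₂ hw h1
          subst h1
          have : w₂ ∈ F.neighborSet w₁ := hw
          rw [hq, Set.mem_singleton_iff] at this
          subst this
          rw [he0]
        -- helper: an F-edge containing q, other than e0, is an F'-edge at q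
        have hqedge : ∀ w, F.Adj q w → s(q, w) ≠ e0 → c' s(q, w) ≠ a := by
          intro w hw hne'
          have hw' : w ∈ F'.neighborSet q := by
            rw [h3]
            refine ⟨hw, fun hwx => hne' ?_⟩
            rw [Set.mem_singleton_iff] at hwx
            subst hwx
            rw [he0, Sym2.eq_swap]
          intro heq
          apply hamem.2
          rw [← heq]
          exact Finset.mem_image.2 ⟨w, (Set.Finite.mem_toFinset _).2 hw', rfl⟩
        rcases hv0 with rfl | rfl
        · -- v = x
          rcases hvf with rfl | rfl
          · exact absurd (hxedge _ _ hadj rfl) hfne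
          · rw [Sym2.eq_swap] at hfne ⊢
            exact absurd (hxedge _ _ hadj.symm rfl) hfne
        · -- v = q
          rcases hvf with rfl | rfl
          · exact hqedge u₂ hadj hfne
          · rw [Sym2.eq_swap] at hfne ⊢
            exact hqedge u₁ hadj.symm hfne
      refine ⟨cc, ?_, ?_⟩
      · intro e he
        by_cases h : e = e0
        · rw [hcc]; simp only [h, if_pos rfl]; exact hamem.1
        · have he' : e ∈ F'.edgeSet := by rw [hF'edge]; exact ⟨he, h⟩
          rw [hcc]; simp only [if_neg h]; exact hc'mem e he'
      · intro e he f hf hef hshare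
        by_cases he0' : e = e0
        · by_cases hf0 : f = e0
          · exact absurd (he0'.trans hf0.symm) hef
          · have := key f hf hf0 (by rw [← he0']; exact hshare)
            rw [hcc]; simp only [if_pos he0', if_neg hf0, he0']
            exact this.symm
        · by_cases hf0 : f = e0
          · have := key e he he0' (by
              obtain ⟨v, hv1, hv2⟩ := hshare
              exact ⟨v, by rw [← hf0]; exact hv2, hv1⟩)
            rw [hcc]; simp only [if_neg he0', if_pos hf0, hf0]
            exact this
          · have he' : e ∈ F'.edgeSet := by rw [hF'edge]; exact ⟨he, he0'⟩
            have hf' : f ∈ F'.edgeSet := by rw [hF'edge]; exact ⟨hf, hf0⟩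
            rw [hcc]; simp only [if_neg he0', if_neg hf0]
            exact hc'prop e he' f hf' hef hshare


lemma reach_delete_swap {a b u y : V} :
    (F.deleteEdges {s(a,b)}).Reachable u y ↔ (F.deleteEdges {s(b,a)}).Reachable u y := by
  rw [Sym2.eq_swap]

lemma isolated_reach {a b y : V} (h : F.neighborSet a = {b})
    (hr : (F.deleteEdges {s(a,b)}).Reachable a y) : y = a := by
  obtain ⟨w⟩ := hr
  cases w with
  | nil => rfl
  | cons h' q =>
    exfalso
    rename_i c
    rw [deleteEdges_adj] at h'
    have hc : c ∈ F.neighborSet a := h'.1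
    rw [h, Set.mem_singleton_iff] at hc
    subst hc
    exact h'.2 rfl

lemma exists_third {s : Set V} (h : 3 ≤ s.ncard) (b c : V) :
    ∃ d ∈ s, d ≠ b ∧ d ≠ c := by
  have hfin : s.Finite := s.finite_of_ncard_ne_zero (by omega)
  set fs := hfin.toFinset with hfs
  have hcard : 3 ≤ fs.card := by rw [Set.ncard_eq_toFinset_card _ hfin] at h; exact h
  have h1 : 1 ≤ ((fs.erase b).erase c).card := by
    have e1 := Finset.pred_card_le_card_erase (s := fs) (a := b)
    have e2 := Finset.pred_card_le_card_erase (s := fs.erase b) (a := c)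
    omega
  obtain ⟨d, hd⟩ := Finset.card_pos.1 h1
  refine ⟨d, ?_, ?_, ?_⟩
  · have := Finset.mem_of_mem_erase (Finset.mem_of_mem_erase hd)
    rwa [hfs, Set.Finite.mem_toFinset] at this
  · exact Finset.ne_of_mem_erase (Finset.mem_of_mem_erase hd)
  · exact Finset.ne_of_mem_erase hd

lemma exists_two_distinct {s : Set V} (h : 2 ≤ s.ncard) :
    ∃ d d', d ∈ s ∧ d' ∈ s ∧ d ≠ d' := by
  have hfin : s.Finite := s.finite_of_ncard_ne_zero (by omega)
  obtain ⟨d, d', hd, hd', hne⟩ := (Set.one_lt_ncard_iff hfin).1 (by omega)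
  exact ⟨d, d', hd, hd', hne⟩

section Fan
variable [Fintype V] {T : SimpleGraph V} {n : ℕ} {σ : ZMod n → V}

/-- The set of (indices of) leaves on the `a`-side of tree edge `ab`. -/
def Jset (T : SimpleGraph V) (σ : ZMod n → V) (a b : V) : Set (ZMod n) :=
  {i : ZMod n | (T.deleteEdges {s(a, b)}).Reachable a (σ i)}

lemma fan_exists (hT : T.IsTree) (hdeg2 : ∀ v, (T.neighborSet v).ncard ≠ 2) (hn : 3 ≤ n)
    (hinj : Function.Injective σ)
    (hrange : Set.range σ = {v : V | (T.neighborSet v).ncard = 1})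
    (hplanar : ∀ a b : V, T.Adj a b →
      CyclicInterval n {i : ZMod n | (T.deleteEdges {s(a, b)}).Reachable a (σ i)}) :
    ∃ (p : V) (t : ZMod n), T.Adj p (σ t) ∧ T.Adj p (σ (t + 1)) := by
  have hF : T.IsAcyclic := hT.IsAcyclic
  haveI : NeZero n := ⟨by omega⟩
  have hcast_ne : ∀ a b : ℕ, a < n → b < n → a ≠ b → ((a : ZMod n) ≠ (b : ZMod n)) := by
    intro a b ha hb hab h
    apply hab
    have := congrArg ZMod.val h
    rwa [ZMod.val_natCast_of_lt ha, ZMod.val_natCast_of_lt hb] at this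
  have h01 : (0 : ZMod n) ≠ 1 := by
    have := hcast_ne 0 1 (by omega) (by omega) (by omega); simpa using this
  have hii : ∀ i : ZMod n, i ≠ i + 1 := by
    intro i h
    exact h01 (by linear_combination h)
  -- leaves
  have hleaf : ∀ i : ZMod n, (T.neighborSet (σ i)).ncard = 1 := by
    intro i
    have : σ i ∈ Set.range σ := ⟨i, rfl⟩
    rwa [hrange] at this
  have hleafidx : ∀ v : V, (T.neighborSet v).ncard = 1 → ∃ i, σ i = v := by
    intro v hv
    have : v ∈ Set.range σ := by rw [hrange]; exact hv
    exact this
  -- Step 1 : an internal vertex exists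
  have hinternal : ∃ w, 3 ≤ (T.neighborSet w).ncard := by
    by_contra hno
    push_neg at hno
    have hle1 : ∀ v, (T.neighborSet v).ncard ≤ 1 := by
      intro v
      have := hno v
      have := hdeg2 v
      omega
    obtain ⟨q0, hq0⟩ := Set.ncard_eq_one.1 (hleaf 0)
    have hq0adj : T.Adj (σ 0) q0 := by
      have : q0 ∈ T.neighborSet (σ 0) := by rw [hq0]; exact rfl
      exact this
    have hq0nb : T.neighborSet q0 = {σ 0} := by
      have h1 : σ 0 ∈ T.neighborSet q0 := hq0adj.symm
      have h2 : (T.neighborSet q0).ncard ≤ 1 := hle1 q0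
      obtain ⟨z, hz⟩ := Set.ncard_eq_one.1 (le_antisymm h2
        (by rw [Nat.succ_le_iff, Set.ncard_pos (Set.toFinite _)]; exact ⟨σ 0, h1⟩))
      rw [hz] at h1 ⊢
      rw [Set.mem_singleton_iff] at h1
      rw [h1]
    have hsmall : ∀ v : V, v = σ 0 ∨ v = q0 := by
      intro v
      have hreach : T.Reachable (σ 0) v := hT.isConnected.preconnected (σ 0) v
      obtain ⟨w⟩ := hreach
      obtain ⟨p, hp⟩ := w.toPath
      cases p with
      | nil => exact Or.inl rfl
      | cons h1 q =>
        rename_i c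
        have hc : c ∈ T.neighborSet (σ 0) := h1
        rw [hq0, Set.mem_singleton_iff] at hc
        subst hc
        cases q with
        | nil => exact Or.inr rfl
        | cons h2 r =>
          rename_i d
          exfalso
          have hd : d ∈ T.neighborSet c := h2
          rw [hq0nb, Set.mem_singleton_iff] at hd
          subst hd
          have hnd := hp.support_nodup
          rw [Walk.support_cons, Walk.support_cons] at hnd
          have : σ 0 ∈ r.support := r.start_mem_support
          simp only [List.nodup_cons] at hnd
          exact hnd.1 (by simp [this])
    have h02 : (0 : ZMod n) ≠ 2 := by
      have := hcast_ne 0 2 (by omega) (by omega) (by omega); simpa using this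
    have h12 : (1 : ZMod n) ≠ 2 := by
      have := hcast_ne 1 2 (by omega) (by omega) (by omega); simpa using this
    have hσ1 := hsmall (σ 1)
    have hσ2 := hsmall (σ 2)
    have hσ10 : σ 1 ≠ σ 0 := fun h => h01 (hinj h).symm
    have hσ20 : σ 2 ≠ σ 0 := fun h => h02 (hinj h).symm
    have hσ12 : σ 1 ≠ σ 2 := fun h => h12 (hinj h)
    rcases hσ1 with h | h <;> rcases hσ2 with h' | h'
    · exact hσ10 h
    · exact hσ10 h
    · exact hσ20 h'
    · exact hσ12 (h.trans h'.symm)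
  -- Step 2 : some tree edge has at least two leaves on one side
  obtain ⟨w, hw3⟩ := hinternal
  have hKne : ∀ c, T.Adj w c → (Jset T σ c w).Nonempty := by
    intro c hwc
    obtain ⟨x, hx, hxleaf⟩ := pendant hF hwc
    obtain ⟨ix, hix⟩ := hleafidx x hxleaf
    refine ⟨ix, ?_⟩
    show (T.deleteEdges {s(c, w)}).Reachable c (σ ix)
    rw [hix, reach_delete_swap]
    exact hx
  have hKdisj : ∀ c c', T.Adj w c → T.Adj w c' → c ≠ c' →
      ∀ i, i ∈ Jset T σ c w → i ∈ Jset T σ c' w → False := by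
    intro c c' hwc hwc' hcc' i hi hi'
    exact disjoint_reach hF hwc hwc' hcc'
      (reach_delete_swap.1 hi) (reach_delete_swap.1 hi')
  have hKsub : ∀ b c, T.Adj w b → T.Adj w c → c ≠ b →
      Jset T σ c w ⊆ Jset T σ w b := by
    intro b c hwb hwc hcb i hi
    show (T.deleteEdges {s(w, b)}).Reachable w (σ i)
    rw [reach_delete_swap]
    exact subset_reach hF hwb.symm hwc hcb (reach_delete_swap.1 hi)
  obtain ⟨b, hb⟩ : (T.neighborSet w).Nonempty := by
    rw [← Set.ncard_pos (Set.toFinite _)]; omega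
  obtain ⟨c, hcmem, hcb, -⟩ := exists_third hw3 b b
  obtain ⟨c', hc'mem, hc'b, hc'c⟩ := exists_third hw3 b c
  obtain ⟨ic, hic⟩ := hKne c hcmem
  obtain ⟨ic', hic'⟩ := hKne c' hc'mem
  have hwb : T.Adj w b := hb
  have hJwb2 : 2 ≤ (Jset T σ w b).ncard := by
    have := (Set.one_lt_ncard_iff (Set.toFinite (Jset T σ w b))).2
      ⟨ic, ic', hKsub b c hwb hcmem hcb hic, hKsub b c' hwb hc'mem hc'b hic',
        fun h => hKdisj c c' hcmem hc'mem hc'c.symm ic hic (h ▸ hic')⟩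
    omega
  -- Step 3 : minimize the number of leaves on a side, among sides with ≥ 2 leaves
  set M : Set ℕ := {m | ∃ a b, T.Adj a b ∧ 2 ≤ (Jset T σ a b).ncard ∧ (Jset T σ a b).ncard = m}
    with hM
  have hMne : M.Nonempty := ⟨(Jset T σ w b).ncard, w, b, hwb, hJwb2, rfl⟩
  obtain ⟨a, b₁, hab, hab2, habcard⟩ := Nat.sInf_mem hMne
  have hmin : ∀ a' b', T.Adj a' b' → 2 ≤ (Jset T σ a' b').ncard →
      sInf M ≤ (Jset T σ a' b').ncard :=
    fun a' b' h1 h2 => Nat.sInf_le ⟨a', b', h1, h2, rfl⟩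
  -- Step 4 : the interval structure gives two cyclically consecutive leaves on this side
  obtain ⟨st, len, hIeq⟩ := hplanar a b₁ hab
  have hI : Jset T σ a b₁ = {x | ∃ j : ℕ, j < len ∧ x = st + (j : ZMod n)} := hIeq
  have hlen2 : 2 ≤ len := by
    by_contra hlen
    push_neg at hlen
    have hsub : Jset T σ a b₁ ⊆ {st} := by
      intro x hx
      rw [hI] at hx
      obtain ⟨j, hj, rfl⟩ := hx
      have hj0 : j = 0 := by omega
      subst hj0
      simp
    have hle := Set.ncard_le_ncard hsub (Set.toFinite _)
    rw [Set.ncard_singleton] at hle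
    omega
  have hts : st ∈ Jset T σ a b₁ := by
    rw [hI]; exact ⟨0, by omega, by simp⟩
  have hts1 : st + 1 ∈ Jset T σ a b₁ := by
    rw [hI]; exact ⟨1, by omega, by norm_num⟩
  -- Step 5 : both those leaves are adjacent to `a`
  have ha3 : 3 ≤ (T.neighborSet a).ncard := by
    have hne0 : (T.neighborSet a).ncard ≠ 0 := by
      intro h0
      rw [Set.ncard_eq_zero (Set.toFinite _)] at h0
      have : b₁ ∈ T.neighborSet a := hab
      rw [h0] at this
      exact this
    have hne1 : (T.neighborSet a).ncard ≠ 1 := by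
      intro h1
      obtain ⟨z, hz⟩ := Set.ncard_eq_one.1 h1
      have hzb : z = b₁ := by
        have hmem : b₁ ∈ T.neighborSet a := hab
        rw [hz, Set.mem_singleton_iff] at hmem
        exact hmem.symm
      subst hzb
      have e1 : σ st = a := isolated_reach hz hts
      have e2 : σ (st + 1) = a := isolated_reach hz hts1
      exact hii st (hinj (e1.trans e2.symm))
    have := hdeg2 a
    omega
  have hmain : ∀ t, t ∈ Jset T σ a b₁ → T.Adj a (σ t) := by
    intro t ht
    have hta : σ t ≠ a := by
      intro h
      have h3 := hleaf t
      rw [h] at h3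
      omega
    obtain ⟨c, hac, hcb, hreach⟩ := first_step hab ht hta
    have htKc : t ∈ Jset T σ c a := by
      show (T.deleteEdges {s(c,a)}).Reachable c (σ t)
      rw [reach_delete_swap]
      exact hreach
    have hKcsub : ∀ c₀, T.Adj a c₀ → c₀ ≠ b₁ → Jset T σ c₀ a ⊆ Jset T σ a b₁ := by
      intro c₀ hac₀ hc₀b i hi
      show (T.deleteEdges {s(a,b₁)}).Reachable a (σ i)
      rw [reach_delete_swap]
      exact subset_reach hF hab.symm hac₀ hc₀b (reach_delete_swap.1 hi)
    obtain ⟨c'', hc''mem, hc''b, hc''c⟩ := exists_third ha3 b₁ c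
    have hac'' : T.Adj a c'' := hc''mem
    obtain ⟨x'', hx'', hx''leaf⟩ := pendant hF hac''
    obtain ⟨i'', hi''⟩ := hleafidx x'' hx''leaf
    have hi''Kc'' : i'' ∈ Jset T σ c'' a := by
      show (T.deleteEdges {s(c'',a)}).Reachable c'' (σ i'')
      rw [hi'', reach_delete_swap]
      exact hx''
    have hi''J : i'' ∈ Jset T σ a b₁ := hKcsub c'' hac'' hc''b hi''Kc''
    have hi''notKc : i'' ∉ Jset T σ c a := by
      intro hmem
      exact disjoint_reach hF hac hac'' (fun h => hc''c h.symm)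
        (reach_delete_swap.1 hmem) (reach_delete_swap.1 hi''Kc'')
    have hss : Jset T σ c a ⊂ Jset T σ a b₁ :=
      ⟨hKcsub c hac hcb, fun habs => hi''notKc (habs hi''J)⟩
    have hlt : (Jset T σ c a).ncard < (Jset T σ a b₁).ncard :=
      Set.ncard_lt_ncard hss (Set.toFinite _)
    have hKc1 : (Jset T σ c a).ncard ≤ 1 := by
      by_contra hge
      push_neg at hge
      have h1 := hmin c a hac.symm (by omega)
      omega
    have hcleaf : (T.neighborSet c).ncard = 1 := by
      by_contra hc1
      have hcne0 : (T.neighborSet c).ncard ≠ 0 := by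
        intro h0
        rw [Set.ncard_eq_zero (Set.toFinite _)] at h0
        have : a ∈ T.neighborSet c := hac.symm
        rw [h0] at this
        exact this
      have hc3 : 3 ≤ (T.neighborSet c).ncard := by
        have := hdeg2 c
        omega
      obtain ⟨d, hdmem, hda, -⟩ := exists_third hc3 a a
      obtain ⟨d', hd'mem, hd'a, hd'd⟩ := exists_third hc3 a d
      have hcd : T.Adj c d := hdmem
      have hcd' : T.Adj c d' := hd'mem
      obtain ⟨xd, hxd, hxdleaf⟩ := pendant hF hcd
      obtain ⟨jd, hjd⟩ := hleafidx xd hxdleaf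
      obtain ⟨xd', hxd', hxd'leaf⟩ := pendant hF hcd'
      obtain ⟨jd', hjd'⟩ := hleafidx xd' hxd'leaf
      have hjdK : jd ∈ Jset T σ c a := by
        show (T.deleteEdges {s(c,a)}).Reachable c (σ jd)
        rw [reach_delete_swap]
        exact subset_reach hF hac hcd hda (by rw [hjd]; exact hxd)
      have hjd'K : jd' ∈ Jset T σ c a := by
        show (T.deleteEdges {s(c,a)}).Reachable c (σ jd')
        rw [reach_delete_swap]
        exact subset_reach hF hac hcd' hd'a (by rw [hjd']; exact hxd')
      have hjdne : jd ≠ jd' := by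
        intro h
        apply disjoint_reach hF hcd hcd' (fun hh => hd'd hh.symm)
          (show (T.deleteEdges {s(c,d)}).Reachable d (σ jd) from by rw [hjd]; exact hxd)
          (show (T.deleteEdges {s(c,d')}).Reachable d' (σ jd) from by
            rw [h, hjd']; exact hxd')
      have h2 := (Set.one_lt_ncard_iff (Set.toFinite (Jset T σ c a))).2
        ⟨jd, jd', hjdK, hjd'K, hjdne⟩
      omega
    obtain ⟨jc, hjc⟩ := hleafidx c hcleaf
    have hjcK : jc ∈ Jset T σ c a := by
      show (T.deleteEdges {s(c,a)}).Reachable c (σ jc)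
      rw [hjc]
    have hjct : jc = t := (Set.ncard_le_one_iff (Set.toFinite _)).1 hKc1 hjcK htKc
    rw [← hjc, hjct] at hac
    exact hac
  exact ⟨a, st, hmain st hts, hmain (st + 1) hts1⟩
end Fan

end HalinAux

open HalinAux in
theorem halin_list_edge_coloring_max_deg_four {V : Type*} [Fintype V] (G : SimpleGraph V)
    [DecidableRel G.Adj] (hG : IsHalin G)
    (L : Sym2 V → Finset ℕ)
    (hL : ∀ v w : V, G.Adj v w → max (max (G.degree v) (G.degree w)) 4 ≤ (L s(v, w)).card) :
    ∃ C, IsListEdgeColoring G L C := by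
  classical
  obtain ⟨T, n, σ, hT, hTG, hdeg2, hn, hinj, hrange, hcycle, hplanar⟩ := hG
  haveI : NeZero n := ⟨by omega⟩
  have hF : T.IsAcyclic := hT.IsAcyclic
  -- basic numeric facts in `ZMod n`
  have hcast_ne : ∀ a b : ℕ, a < n → b < n → a ≠ b → ((a : ZMod n) ≠ (b : ZMod n)) := by
    intro a b ha hb hab h
    apply hab
    have := congrArg ZMod.val h
    rwa [ZMod.val_natCast_of_lt ha, ZMod.val_natCast_of_lt hb] at this
  have h10 : (1 : ZMod n) ≠ 0 := by
    have := hcast_ne 1 0 (by omega) (by omega) (by omega); simpa using this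
  have h20 : (2 : ZMod n) ≠ 0 := by
    have := hcast_ne 2 0 (by omega) (by omega) (by omega); simpa using this
  have hii : ∀ i : ZMod n, σ i ≠ σ (i + 1) := by
    intro i h
    have := hinj h
    apply h10
    linear_combination -this
  -- leaves and parents
  have hleaf : ∀ i : ZMod n, (T.neighborSet (σ i)).ncard = 1 := by
    intro i
    have : σ i ∈ Set.range σ := ⟨i, rfl⟩
    rwa [hrange] at this
  have hpar0 : ∀ i : ZMod n, ∃ q, T.neighborSet (σ i) = {q} :=
    fun i => Set.ncard_eq_one.1 (hleaf i)
  choose par hpar using hpar0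
  have hparadj : ∀ i, T.Adj (σ i) (par i) := by
    intro i
    have : par i ∈ T.neighborSet (σ i) := by rw [hpar i]; exact rfl
    exact this
  -- each cycle pair is G-adjacent but not T-adjacent
  have hGcyc : ∀ i : ZMod n, G.Adj (σ i) (σ (i+1)) ∧ ¬ T.Adj (σ i) (σ (i+1)) :=
    fun i => (hcycle (σ i) (σ (i+1))).2 ⟨i, Or.inl ⟨rfl, rfl⟩⟩
  -- degrees
  have hdegG : ∀ u : V, (T.neighborSet u).ncard ≤ G.degree u := by
    intro u
    have hsub : T.neighborSet u ⊆ G.neighborSet u := fun w hw => hTG hw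
    have h1 := Set.ncard_le_ncard hsub (Set.toFinite _)
    have h2 : (G.neighborSet u).ncard = G.degree u := by
      rw [Set.ncard_eq_toFinset_card', Set.toFinset_card]
      exact card_neighborSet_eq_degree G u
    omega
  -- the unique tree edge at a leaf
  have huniq : ∀ (i : ZMod n) (e : Sym2 V), e ∈ T.edgeSet → σ i ∈ e →
      e = s(σ i, par i) := by
    intro i e he hme
    induction e using Sym2.ind with
    | _ u v =>
      have hadj : T.Adj u v := he
      rw [Sym2.mem_iff] at hme
      rcases hme with h | h
      · have hv : v ∈ T.neighborSet (σ i) := by rw [h]; exact hadj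
        rw [hpar i, Set.mem_singleton_iff] at hv
        rw [← h, hv]
      · have hu : u ∈ T.neighborSet (σ i) := by rw [h]; exact hadj.symm
        rw [hpar i, Set.mem_singleton_iff] at hu
        rw [← h, hu, Sym2.eq_swap]
  -- define spokes / cycle edges / residual lists
  set spoke : ZMod n → Sym2 V := fun i => s(σ i, par i) with hspoke
  set cycE : ZMod n → Sym2 V := fun i => s(σ i, σ (i+1)) with hcycE
  have hcycE_G : ∀ i, cycE i ∈ G.edgeSet := fun i => (hGcyc i).1
  have hcycE_notT : ∀ i, cycE i ∉ T.edgeSet := fun i => (hGcyc i).2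
  have hspoke_T : ∀ i, spoke i ∈ T.edgeSet := fun i => hparadj i
  have hL4 : ∀ i, 4 ≤ (L (cycE i)).card := by
    intro i
    have := hL (σ i) (σ (i+1)) (hGcyc i).1
    simp only [hcycE]
    omega
  set Rres : (Sym2 V → ℕ) → ZMod n → Finset ℕ :=
    fun cT i => (L (cycE i)) \ {cT (spoke i), cT (spoke (i+1))} with hRres
  have hR2 : ∀ (cT : Sym2 V → ℕ) (i : ZMod n), 2 ≤ (Rres cT i).card := by
    intro cT i
    simp only [hRres]
    have h1 := Finset.card_le_card_sdiff_add_card (s := L (cycE i))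
      (t := ({cT (spoke i), cT (spoke (i+1))} : Finset ℕ))
    have h2 : ({cT (spoke i), cT (spoke (i+1))} : Finset ℕ).card ≤ 2 :=
      Finset.card_insert_le _ _ |>.trans (by simp)
    have := hL4 i
    omega
  -- tree colouring
  have hcond : ∀ u v, T.Adj u v → (T.neighborSet u).ncard ≤ (L s(u,v)).card := by
    intro u v huv
    have hGuv : G.Adj u v := hTG huv
    have := hL u v hGuv
    have := hdegG u
    omega
  obtain ⟨c0, hc0mem, hc0prop⟩ := forest_coloring (T.edgeSet.ncard) T hF le_rfl L hcond
  -- main goal : a tree colouring whose residual lists admit a cycle colouring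
  have hfinal : ∃ cT : Sym2 V → ℕ,
      (∀ e ∈ T.edgeSet, cT e ∈ L e) ∧
      (∀ e ∈ T.edgeSet, ∀ f ∈ T.edgeSet, e ≠ f → (∃ v, v ∈ e ∧ v ∈ f) → cT e ≠ cT f) ∧
      ∃ cyc : ZMod n → ℕ, (∀ i, cyc i ∈ Rres cT i) ∧ ∀ i, cyc i ≠ cyc (i+1) := by
    by_cases hcol : ∃ cyc : ZMod n → ℕ, (∀ i, cyc i ∈ Rres c0 i) ∧ ∀ i, cyc i ≠ cyc (i+1)
    · exact ⟨c0, hc0mem, hc0prop, hcol⟩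
    obtain ⟨x, y, hxy, hRxy⟩ := cycle_fail_structure hn (Rres c0) (hR2 c0) hcol
    -- structural facts about the lists in the failure situation
    have hfacts : ∀ i : ZMod n, x ∈ L (cycE i) ∧ y ∈ L (cycE i) ∧
        x ≠ c0 (spoke i) ∧ x ≠ c0 (spoke (i+1)) ∧
        y ≠ c0 (spoke i) ∧ y ≠ c0 (spoke (i+1)) := by
      intro i
      have hx : x ∈ Rres c0 i := by rw [hRxy i]; exact Finset.mem_insert_self _ _
      have hy : y ∈ Rres c0 i := by
        rw [hRxy i]; exact Finset.mem_insert_of_mem (Finset.mem_singleton_self _)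
      simp only [hRres] at hx hy
      obtain ⟨hx1, hx2⟩ := Finset.mem_sdiff.1 hx
      obtain ⟨hy1, hy2⟩ := Finset.mem_sdiff.1 hy
      simp only [Finset.mem_insert, Finset.mem_singleton] at hx2 hy2
      push_neg at hx2 hy2
      exact ⟨hx1, hy1, hx2.1, hx2.2, hy2.1, hy2.2⟩
    have hLeq : ∀ i : ZMod n, L (cycE i) = {x, y, c0 (spoke i), c0 (spoke (i+1))} ∧
        c0 (spoke i) ≠ c0 (spoke (i+1)) ∧ c0 (spoke i) ∈ L (cycE i) ∧
        c0 (spoke (i+1)) ∈ L (cycE i) := by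
      intro i
      have hsub : L (cycE i) ⊆ {x, y, c0 (spoke i), c0 (spoke (i+1))} := by
        intro z hz
        by_cases h1 : z = c0 (spoke i)
        · simp [h1]
        by_cases h2 : z = c0 (spoke (i+1))
        · simp [h2]
        have hzR : z ∈ Rres c0 i := by
          simp only [hRres]
          refine Finset.mem_sdiff.2 ⟨hz, ?_⟩
          simp [h1, h2]
        rw [hRxy i] at hzR
        simp only [Finset.mem_insert, Finset.mem_singleton] at hzR
        rcases hzR with h | h <;> simp [h]
      have hcardle := Finset.card_le_card hsub
      have hL4i := hL4 i
      have hne : c0 (spoke i) ≠ c0 (spoke (i+1)) := by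
        intro he
        have hset : ({x, y, c0 (spoke i), c0 (spoke (i+1))} : Finset ℕ) =
            {x, y, c0 (spoke i)} := by
          rw [← he]; simp
        rw [hset] at hcardle
        have : ({x, y, c0 (spoke i)} : Finset ℕ).card ≤ 3 := by
          apply le_trans (Finset.card_insert_le _ _)
          have : ({y, c0 (spoke i)} : Finset ℕ).card ≤ 2 := by
            apply le_trans (Finset.card_insert_le _ _)
            simp
          omega
        omega
      have hcard4 : ({x, y, c0 (spoke i), c0 (spoke (i+1))} : Finset ℕ).card ≤ 4 := by
        apply le_trans (Finset.card_insert_le _ _)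
        have h3 : ({y, c0 (spoke i), c0 (spoke (i+1))} : Finset ℕ).card ≤ 3 := by
          apply le_trans (Finset.card_insert_le _ _)
          have : ({c0 (spoke i), c0 (spoke (i+1))} : Finset ℕ).card ≤ 2 := by
            apply le_trans (Finset.card_insert_le _ _)
            simp
          omega
        omega
      have heq : L (cycE i) = {x, y, c0 (spoke i), c0 (spoke (i+1))} :=
        Finset.eq_of_subset_of_card_le hsub (by omega)
      refine ⟨heq, hne, ?_, ?_⟩
      · rw [heq]; simp
      · rw [heq]; simp
    -- arithmetic helpers
    have e_t : ∀ t : ZMod n, t + 1 ≠ t := by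
      intro t h
      rw [add_eq_left] at h
      exact h10 h
    have e_t2 : ∀ t : ZMod n, t + 2 ≠ t := by
      intro t h
      rw [add_eq_left] at h
      exact h20 h
    have e_tm1 : ∀ t : ZMod n, t - 1 ≠ t := by
      intro t h
      rw [sub_eq_self] at h
      exact h10 h
    have e_tm1' : ∀ t : ZMod n, t - 1 ≠ t + 1 := by
      intro t h
      exact h20 (by linear_combination -h)
    -- the fan : two consecutive leaves with a common parent
    obtain ⟨p, t, hp1, hp2⟩ := fan_exists hT hdeg2 hn hinj hrange hplanar
    have hpart : par t = p := by
      have h : p ∈ T.neighborSet (σ t) := hp1.symm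
      rw [hpar t, Set.mem_singleton_iff] at h
      exact h.symm
    have hpart1 : par (t+1) = p := by
      have h : p ∈ T.neighborSet (σ (t+1)) := hp2.symm
      rw [hpar (t+1), Set.mem_singleton_iff] at h
      exact h.symm
    have hpnl : ∀ i : ZMod n, σ i ≠ p := by
      intro i hip
      have h1 : σ t ∈ T.neighborSet (σ i) := by rw [hip]; exact hp1
      have h2 : σ (t+1) ∈ T.neighborSet (σ i) := by rw [hip]; exact hp2
      rw [hpar i, Set.mem_singleton_iff] at h1 h2
      exact hii t (h1.trans h2.symm)
    have hspne : ∀ i j : ZMod n, par j = p → i ≠ j → spoke i ≠ spoke j := by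
      intro i j hpj hij h
      simp only [hspoke, Sym2.eq_iff] at h
      rcases h with ⟨h1, _⟩ | ⟨h1, _⟩
      · exact hij (hinj h1)
      · rw [hpj] at h1
        exact hpnl i h1
    -- colours of the tree edges at p
    set usedP : Finset ℕ :=
      ((Set.toFinite (T.neighborSet p)).toFinset).image (fun w => c0 s(p, w)) with husedP
    have husedP_mem : ∀ w, T.Adj p w → c0 s(p, w) ∈ usedP := by
      intro w hw
      rw [husedP]
      exact Finset.mem_image.2 ⟨w, (Set.Finite.mem_toFinset _).2 hw, rfl⟩
    have hsppt : s(p, σ t) = spoke t := by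
      simp only [hspoke, hpart]
      exact Sym2.eq_swap
    have hsppt1 : s(p, σ (t+1)) = spoke (t+1) := by
      simp only [hspoke, hpart1]
      exact Sym2.eq_swap
    have hsvt_mem : c0 (spoke t) ∈ usedP := by
      have := husedP_mem (σ t) hp1
      rwa [hsppt] at this
    have hsvt1_mem : c0 (spoke (t+1)) ∈ usedP := by
      have := husedP_mem (σ (t+1)) hp2
      rwa [hsppt1] at this
    have hedgeatp : ∀ f, f ∈ T.edgeSet → p ∈ f → c0 f ∈ usedP := by
      intro f hf hpf
      induction f using Sym2.ind with
      | _ u v =>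
        have hadj : T.Adj u v := hf
        rcases Sym2.mem_iff.1 hpf with h | h
        · subst h
          exact husedP_mem v hadj
        · subst h
          rw [Sym2.eq_swap]
          exact husedP_mem u hadj.symm
    have husedP_card : usedP.card ≤ G.degree p := by
      have h1 : usedP.card ≤ ((Set.toFinite (T.neighborSet p)).toFinset).card :=
        Finset.card_image_le
      have h2 : ((Set.toFinite (T.neighborSet p)).toFinset).card = (T.neighborSet p).ncard :=
        (Set.ncard_eq_toFinset_card _ _).symm
      have h3 := hdegG p
      omega
    -- a generic single-edge recolouring is proper
    have hmkprop : ∀ (t₀ : ZMod n) (z₀ : ℕ), par t₀ = p → z₀ ∉ usedP →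
        (∀ e ∈ T.edgeSet, ∀ f ∈ T.edgeSet, e ≠ f → (∃ v, v ∈ e ∧ v ∈ f) →
          (if e = spoke t₀ then z₀ else c0 e) ≠ (if f = spoke t₀ then z₀ else c0 f)) := by
      intro t₀ z₀ hpt₀ hz₀ e he f hf hef hshare
      have key : ∀ g, g ∈ T.edgeSet → g ≠ spoke t₀ → (∃ v, v ∈ g ∧ v ∈ spoke t₀) →
          c0 g ≠ z₀ := by
        intro g hg hgne hgsh
        obtain ⟨v, hvg, hvs⟩ := hgsh
        have hvs' : v = σ t₀ ∨ v = par t₀ := by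
          simp only [hspoke, Sym2.mem_iff] at hvs
          exact hvs
        rcases hvs' with h | h
        · rw [h] at hvg
          exact absurd (huniq t₀ g hg hvg) hgne
        · rw [hpt₀] at h
          rw [h] at hvg
          intro hcon
          exact hz₀ (hcon ▸ hedgeatp g hg hvg)
      by_cases he' : e = spoke t₀ <;> by_cases hf' : f = spoke t₀
      · exact absurd (he'.trans hf'.symm) hef
      · simp only [if_pos he', if_neg hf']
        refine fun h => (key f hf hf' ?_) h.symm
        obtain ⟨v, h1, h2⟩ := hshare
        exact ⟨v, h2, he' ▸ h1⟩
      · simp only [if_neg he', if_pos hf']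
        refine key e he he' ?_
        obtain ⟨v, h1, h2⟩ := hshare
        exact ⟨v, h1, hf' ▸ h2⟩
      · simp only [if_neg he', if_neg hf']
        exact hc0prop e he f hf hef hshare
    by_cases hA : ((L (spoke t)) \ usedP).Nonempty
    · -- single change at spoke t
      obtain ⟨z, hz⟩ := hA
      rw [Finset.mem_sdiff] at hz
      set cT' : Sym2 V → ℕ := fun e => if e = spoke t then z else c0 e with hcT'
      have hspt : cT' (spoke t) = z := by rw [hcT']; simp
      have hspo : ∀ j, j ≠ t → cT' (spoke j) = c0 (spoke j) := by
        intro j hj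
        rw [hcT']
        simp only [if_neg (hspne j t hpart hj)]
      have hmem' : ∀ e ∈ T.edgeSet, cT' e ∈ L e := by
        intro e he
        rw [hcT']
        by_cases h : e = spoke t
        · simp only [if_pos h]; rw [h]; exact hz.1
        · simp only [if_neg h]; exact hc0mem e he
      have hprop'' : ∀ e ∈ T.edgeSet, ∀ f ∈ T.edgeSet, e ≠ f → (∃ v, v ∈ e ∧ v ∈ f) →
          cT' e ≠ cT' f := by
        intro e he f hf hef hsh
        rw [hcT']
        exact hmkprop t z hpart hz.2 e he f hf hef hsh
      have hRunch : ∀ i, i ≠ t → i + 1 ≠ t → Rres cT' i = {x, y} := by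
        intro i h1 h2
        have hh : Rres cT' i = Rres c0 i := by
          simp only [hRres, hspo i h1, hspo (i+1) h2]
        rw [hh, hRxy i]
      have hzt : z ≠ c0 (spoke t) := fun h => hz.2 (h ▸ hsvt_mem)
      refine ⟨cT', hmem', hprop'', ?_⟩
      by_cases hzxy : z = x ∨ z = y
      · apply cycle_color_of_ne hn (Rres cT') (hR2 cT') t
        have hz1 : z ∉ Rres cT' t := by
          simp only [hRres, hspt]
          intro hcon
          exact (Finset.mem_sdiff.1 hcon).2 (by simp)
        have hz2 : z ∈ Rres cT' (t+1) := by
          rw [hRunch (t+1) (e_t t) (by rw [show t+1+1 = t+2 from by ring]; exact e_t2 t)]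
          rcases hzxy with h | h <;> simp [h]
        exact fun h => hz1 (h ▸ hz2)
      · push_neg at hzxy
        apply cycle_color_of_big hn (Rres cT') (hR2 cT') (t-1)
        have harith : t - 1 + 1 = t := by ring
        have hf := hfacts (t-1)
        rw [harith] at hf
        have hl := hLeq (t-1)
        rw [harith] at hl
        have hRt1 : Rres cT' (t-1) = (L (cycE (t-1))) \ {c0 (spoke (t-1)), z} := by
          simp only [hRres, harith, hspt, hspo (t-1) (e_tm1 t)]
        have hsubset : ({x, y, c0 (spoke t)} : Finset ℕ) ⊆ Rres cT' (t-1) := by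
          rw [hRt1]
          intro w hw
          simp only [Finset.mem_insert, Finset.mem_singleton] at hw
          rw [Finset.mem_sdiff]
          rcases hw with rfl | rfl | rfl
          · refine ⟨hf.1, ?_⟩
            simp only [Finset.mem_insert, Finset.mem_singleton]
            push_neg
            exact ⟨hf.2.2.1, fun h => hzxy.1 h.symm⟩
          · refine ⟨hf.2.1, ?_⟩
            simp only [Finset.mem_insert, Finset.mem_singleton]
            push_neg
            exact ⟨hf.2.2.2.2.1, fun h => hzxy.2 h.symm⟩
          · refine ⟨by rw [hl.1]; simp, ?_⟩
            simp only [Finset.mem_insert, Finset.mem_singleton]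
            push_neg
            exact ⟨hl.2.1.symm, hzt.symm⟩
        have h3 : ({x, y, c0 (spoke t)} : Finset ℕ).card = 3 := by
          rw [Finset.card_insert_of_notMem (by
              simp only [Finset.mem_insert, Finset.mem_singleton]
              push_neg
              exact ⟨hxy, (hfacts t).2.2.1⟩),
            Finset.card_insert_of_notMem (by
              simp only [Finset.mem_singleton]
              exact (hfacts t).2.2.2.2.1),
            Finset.card_singleton]
        calc (3 : ℕ) = ({x, y, c0 (spoke t)} : Finset ℕ).card := h3.symm
          _ ≤ _ := Finset.card_le_card hsubset
    by_cases hA' : ((L (spoke (t+1))) \ usedP).Nonempty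
    · -- single change at spoke (t+1)
      obtain ⟨z, hz⟩ := hA'
      rw [Finset.mem_sdiff] at hz
      set cT' : Sym2 V → ℕ := fun e => if e = spoke (t+1) then z else c0 e with hcT'
      have hspt1 : cT' (spoke (t+1)) = z := by rw [hcT']; simp
      have hspo : ∀ j, j ≠ t + 1 → cT' (spoke j) = c0 (spoke j) := by
        intro j hj
        rw [hcT']
        simp only [if_neg (hspne j (t+1) hpart1 hj)]
      have hmem' : ∀ e ∈ T.edgeSet, cT' e ∈ L e := by
        intro e he
        rw [hcT']
        by_cases h : e = spoke (t+1)
        · simp only [if_pos h]; rw [h]; exact hz.1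
        · simp only [if_neg h]; exact hc0mem e he
      have hprop'' : ∀ e ∈ T.edgeSet, ∀ f ∈ T.edgeSet, e ≠ f → (∃ v, v ∈ e ∧ v ∈ f) →
          cT' e ≠ cT' f := by
        intro e he f hf hef hsh
        rw [hcT']
        exact hmkprop (t+1) z hpart1 hz.2 e he f hf hef hsh
      have hRunch : ∀ i, i ≠ t + 1 → i + 1 ≠ t + 1 → Rres cT' i = {x, y} := by
        intro i h1 h2
        have hh : Rres cT' i = Rres c0 i := by
          simp only [hRres, hspo i h1, hspo (i+1) h2]
        rw [hh, hRxy i]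
      have hzt1 : z ≠ c0 (spoke (t+1)) := fun h => hz.2 (h ▸ hsvt1_mem)
      have harith : t - 1 + 1 = t := by ring
      refine ⟨cT', hmem', hprop'', ?_⟩
      by_cases hzxy : z = x ∨ z = y
      · apply cycle_color_of_ne hn (Rres cT') (hR2 cT') (t-1)
        have hz1 : z ∉ Rres cT' t := by
          simp only [hRres, hspt1]
          intro hcon
          exact (Finset.mem_sdiff.1 hcon).2 (by simp)
        have hz2 : z ∈ Rres cT' (t-1) := by
          rw [hRunch (t-1) (e_tm1' t) (by rw [harith]; exact fun h => e_t t h.symm)]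
          rcases hzxy with h | h <;> simp [h]
        rw [harith]
        exact fun h => hz1 (h ▸ hz2)
      · push_neg at hzxy
        apply cycle_color_of_big hn (Rres cT') (hR2 cT') (t+1)
        have hf := hfacts (t+1)
        have hl := hLeq (t+1)
        have hRt1 : Rres cT' (t+1) = (L (cycE (t+1))) \ {z, c0 (spoke (t+1+1))} := by
          simp only [hRres, hspt1, hspo (t+1+1) (e_t (t+1))]
        have hsubset : ({x, y, c0 (spoke (t+1))} : Finset ℕ) ⊆ Rres cT' (t+1) := by
          rw [hRt1]
          intro w hw
          simp only [Finset.mem_insert, Finset.mem_singleton] at hw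
          rw [Finset.mem_sdiff]
          rcases hw with rfl | rfl | rfl
          · refine ⟨hf.1, ?_⟩
            simp only [Finset.mem_insert, Finset.mem_singleton]
            push_neg
            exact ⟨fun h => hzxy.1 h.symm, hf.2.2.2.1⟩
          · refine ⟨hf.2.1, ?_⟩
            simp only [Finset.mem_insert, Finset.mem_singleton]
            push_neg
            exact ⟨fun h => hzxy.2 h.symm, hf.2.2.2.2.2⟩
          · refine ⟨hl.2.2.1, ?_⟩
            simp only [Finset.mem_insert, Finset.mem_singleton]
            push_neg
            exact ⟨hzt1.symm, hl.2.1⟩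
        have h3 : ({x, y, c0 (spoke (t+1))} : Finset ℕ).card = 3 := by
          rw [Finset.card_insert_of_notMem (by
              simp only [Finset.mem_insert, Finset.mem_singleton]
              push_neg
              exact ⟨hxy, (hfacts (t+1)).2.2.1⟩),
            Finset.card_insert_of_notMem (by
              simp only [Finset.mem_singleton]
              exact (hfacts (t+1)).2.2.2.2.1),
            Finset.card_singleton]
        calc (3 : ℕ) = ({x, y, c0 (spoke (t+1))} : Finset ℕ).card := h3.symm
          _ ≤ _ := Finset.card_le_card hsubset
    · -- swap the two spoke colours
      have hsub1 : L (spoke t) ⊆ usedP :=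
        Finset.sdiff_eq_empty_iff_subset.1 (Finset.not_nonempty_iff_eq_empty.1 hA)
      have hsub2 : L (spoke (t+1)) ⊆ usedP :=
        Finset.sdiff_eq_empty_iff_subset.1 (Finset.not_nonempty_iff_eq_empty.1 hA')
      have hdL1 : G.degree p ≤ (L (spoke t)).card := by
        have := hL p (σ t) (hTG hp1)
        rw [hsppt] at this
        omega
      have hdL2 : G.degree p ≤ (L (spoke (t+1))).card := by
        have := hL p (σ (t+1)) (hTG hp2)
        rw [hsppt1] at this
        omega
      have heq1 : L (spoke t) = usedP :=
        Finset.eq_of_subset_of_card_le hsub1 (by omega)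
      have heq2 : L (spoke (t+1)) = usedP :=
        Finset.eq_of_subset_of_card_le hsub2 (by omega)
      have hst1_in : c0 (spoke (t+1)) ∈ L (spoke t) := by rw [heq1]; exact hsvt1_mem
      have hst_in : c0 (spoke t) ∈ L (spoke (t+1)) := by rw [heq2]; exact hsvt_mem
      set cT' : Sym2 V → ℕ := fun e =>
        if e = spoke t then c0 (spoke (t+1)) else
          if e = spoke (t+1) then c0 (spoke t) else c0 e with hcT'
      have hspne1 : spoke (t+1) ≠ spoke t := hspne (t+1) t hpart (e_t t)
      have hv1 : cT' (spoke t) = c0 (spoke (t+1)) := by rw [hcT']; simp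
      have hv2 : cT' (spoke (t+1)) = c0 (spoke t) := by
        rw [hcT']
        simp [hspne1]
      have hvo : ∀ j, j ≠ t → j ≠ t + 1 → cT' (spoke j) = c0 (spoke j) := by
        intro j h1 h2
        rw [hcT']
        simp only [if_neg (hspne j t hpart h1), if_neg (hspne j (t+1) hpart1 h2)]
      have hmem' : ∀ e ∈ T.edgeSet, cT' e ∈ L e := by
        intro e he
        rw [hcT']
        by_cases h : e = spoke t
        · simp only [if_pos h]; rw [h]; exact hst1_in
        by_cases h' : e = spoke (t+1)
        · simp only [if_neg h, if_pos h']; rw [h']; exact hst_in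
        · simp only [if_neg h, if_neg h']; exact hc0mem e he
      -- a tree edge sharing a vertex with `spoke j` (j = t, t+1), other than the spoke itself,
      -- contains p
      have hx1 : ∀ (t₀ : ZMod n), par t₀ = p → ∀ g, g ∈ T.edgeSet → g ≠ spoke t₀ →
          (∃ v, v ∈ g ∧ v ∈ spoke t₀) → p ∈ g := by
        intro t₀ hpt₀ g hg hgne hsh
        obtain ⟨v, hvg, hvs⟩ := hsh
        have hvs' : v = σ t₀ ∨ v = par t₀ := by
          simp only [hspoke, Sym2.mem_iff] at hvs
          exact hvs
        rcases hvs' with h | h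
        · rw [h] at hvg
          exact absurd (huniq t₀ g hg hvg) hgne
        · rw [hpt₀] at h
          rwa [h] at hvg
      have hpspoke : ∀ (t₀ : ZMod n), par t₀ = p → p ∈ spoke t₀ := by
        intro t₀ hpt₀
        simp only [hspoke, Sym2.mem_iff]
        right
        exact hpt₀.symm
      have hprop'' : ∀ e ∈ T.edgeSet, ∀ f ∈ T.edgeSet, e ≠ f → (∃ v, v ∈ e ∧ v ∈ f) →
          cT' e ≠ cT' f := by
        intro e he f hf hef hsh
        obtain ⟨v, hv1', hv2'⟩ := hsh
        have hval : ∀ g, g ≠ spoke t → g ≠ spoke (t+1) → cT' g = c0 g := by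
          intro g h1 h2
          rw [hcT']
          simp only [if_neg h1, if_neg h2]
        by_cases he1 : e = spoke t
        · subst he1
          by_cases hf1 : f = spoke t
          · exact absurd hf1.symm hef
          by_cases hf2 : f = spoke (t+1)
          · subst hf2
            rw [hv1, hv2]
            exact fun h => (hLeq t).2.1 h.symm
          · rw [hv1, hval f hf1 hf2]
            have hpf : p ∈ f := hx1 t hpart f hf hf1 ⟨v, hv2', hv1'⟩
            exact fun h => hc0prop f hf (spoke (t+1)) (hspoke_T (t+1)) hf2
              ⟨p, hpf, hpspoke (t+1) hpart1⟩ h.symm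
        by_cases he2 : e = spoke (t+1)
        · subst he2
          by_cases hf1 : f = spoke t
          · subst hf1
            rw [hv1, hv2]
            exact fun h => (hLeq t).2.1 h
          by_cases hf2 : f = spoke (t+1)
          · exact absurd hf2.symm hef
          · rw [hv2, hval f hf1 hf2]
            have hpf : p ∈ f := hx1 (t+1) hpart1 f hf hf2 ⟨v, hv2', hv1'⟩
            exact fun h => hc0prop f hf (spoke t) (hspoke_T t) hf1
              ⟨p, hpf, hpspoke t hpart⟩ h.symm
        by_cases hf1 : f = spoke t
        · subst hf1
          rw [hv1, hval e he1 he2]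
          have hpe : p ∈ e := hx1 t hpart e he he1 ⟨v, hv1', hv2'⟩
          exact hc0prop e he (spoke (t+1)) (hspoke_T (t+1)) he2
            ⟨p, hpe, hpspoke (t+1) hpart1⟩
        by_cases hf2 : f = spoke (t+1)
        · subst hf2
          rw [hv2, hval e he1 he2]
          have hpe : p ∈ e := hx1 (t+1) hpart1 e he he2 ⟨v, hv1', hv2'⟩
          exact hc0prop e he (spoke t) (hspoke_T t) he1
            ⟨p, hpe, hpspoke t hpart⟩
        · rw [hval e he1 he2, hval f hf1 hf2]
          exact hc0prop e he f hf hef ⟨v, hv1', hv2'⟩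
      refine ⟨cT', hmem', hprop'', ?_⟩
      apply cycle_color_of_big hn (Rres cT') (hR2 cT') (t-1)
      have harith : t - 1 + 1 = t := by ring
      have hf := hfacts (t-1)
      rw [harith] at hf
      have hl := hLeq (t-1)
      rw [harith] at hl
      have hRt1 : Rres cT' (t-1) =
          (L (cycE (t-1))) \ {c0 (spoke (t-1)), c0 (spoke (t+1))} := by
        simp only [hRres, harith, hv1, hvo (t-1) (e_tm1 t) (e_tm1' t)]
      have hsubset : ({x, y, c0 (spoke t)} : Finset ℕ) ⊆ Rres cT' (t-1) := by
        rw [hRt1]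
        intro w hw
        simp only [Finset.mem_insert, Finset.mem_singleton] at hw
        rw [Finset.mem_sdiff]
        rcases hw with rfl | rfl | rfl
        · refine ⟨hf.1, ?_⟩
          simp only [Finset.mem_insert, Finset.mem_singleton]
          push_neg
          exact ⟨hf.2.2.1, (hfacts t).2.2.2.1⟩
        · refine ⟨hf.2.1, ?_⟩
          simp only [Finset.mem_insert, Finset.mem_singleton]
          push_neg
          exact ⟨hf.2.2.2.2.1, (hfacts t).2.2.2.2.2⟩
        · refine ⟨by rw [hl.1]; simp, ?_⟩
          simp only [Finset.mem_insert, Finset.mem_singleton]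
          push_neg
          exact ⟨hl.2.1.symm, (hLeq t).2.1⟩
      have h3 : ({x, y, c0 (spoke t)} : Finset ℕ).card = 3 := by
        rw [Finset.card_insert_of_notMem (by
            simp only [Finset.mem_insert, Finset.mem_singleton]
            push_neg
            exact ⟨hxy, (hfacts t).2.2.1⟩),
          Finset.card_insert_of_notMem (by
            simp only [Finset.mem_singleton]
            exact (hfacts t).2.2.2.2.1),
          Finset.card_singleton]
      calc (3 : ℕ) = ({x, y, c0 (spoke t)} : Finset ℕ).card := h3.symm
        _ ≤ _ := Finset.card_le_card hsubset
  -- assembly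
  obtain ⟨cT, hmem, hprop, cyc, hcycmem, hcycne⟩ := hfinal
  have hcycinj : ∀ i j : ZMod n, cycE i = cycE j → i = j := by
    intro i j h
    simp only [hcycE, Sym2.eq_iff] at h
    rcases h with ⟨h1, h2⟩ | ⟨h1, h2⟩
    · exact hinj h1
    · exfalso
      have e1 : i = j + 1 := hinj h1
      have e2 : i + 1 = j := hinj h2
      apply h20
      have e3 : j + 1 + 1 = j := by rw [← e1]; exact e2
      linear_combination e3
  set C : Sym2 V → ℕ := fun e =>
    if h : ∃ i : ZMod n, e = cycE i then cyc h.choose else cT e with hC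
  have hCcyc : ∀ i, C (cycE i) = cyc i := by
    intro i
    have hex : ∃ j : ZMod n, cycE i = cycE j := ⟨i, rfl⟩
    rw [hC]
    simp only [dif_pos hex]
    rw [← hcycinj i hex.choose hex.choose_spec]
  have hCtree : ∀ e ∈ T.edgeSet, C e = cT e := by
    intro e he
    rw [hC]
    have hnotc : ¬ ∃ i : ZMod n, e = cycE i := by
      rintro ⟨i, rfl⟩
      exact hcycE_notT i he
    simp only [dif_neg hnotc]
  have hclass : ∀ e ∈ G.edgeSet, e ∈ T.edgeSet ∨ ∃ i, e = cycE i := by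
    intro e he
    induction e using Sym2.ind with
    | _ u v =>
      by_cases hT' : T.Adj u v
      · exact Or.inl hT'
      · obtain ⟨i, hi⟩ := (hcycle u v).1 ⟨he, hT'⟩
        rcases hi with ⟨h1, h2⟩ | ⟨h1, h2⟩
        · exact Or.inr ⟨i, by rw [h1, h2]⟩
        · exact Or.inr ⟨i, by rw [h1, h2, hcycE, Sym2.eq_swap]⟩
  have hcycmem' : ∀ j : ZMod n, cyc j ∈ L (cycE j) ∧
      cyc j ≠ cT (spoke j) ∧ cyc j ≠ cT (spoke (j+1)) := by
    intro j
    have h := hcycmem j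
    simp only [hRres] at h
    have h1 := Finset.mem_sdiff.1 h
    have h2 := h1.2
    simp only [Finset.mem_insert, Finset.mem_singleton] at h2
    push_neg at h2
    exact ⟨h1.1, h2.1, h2.2⟩
  have hmix : ∀ (j : ZMod n) (f : Sym2 V), f ∈ T.edgeSet → (∃ v, v ∈ f ∧ v ∈ cycE j) →
      cT f ≠ cyc j := by
    intro j f hf hsh
    obtain ⟨v, hvf, hvc⟩ := hsh
    have hvc' : v = σ j ∨ v = σ (j+1) := by
      simp only [hcycE, Sym2.mem_iff] at hvc
      exact hvc
    rcases hvc' with h | h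
    · rw [h] at hvf
      rw [huniq j f hf hvf]
      exact fun hh => (hcycmem' j).2.1 (by rw [hspoke]; exact hh.symm)
    · rw [h] at hvf
      rw [huniq (j+1) f hf hvf]
      exact fun hh => (hcycmem' j).2.2 (by rw [hspoke]; exact hh.symm)
  refine ⟨C, ?_, ?_⟩
  · intro e he
    rcases hclass e he with ht | ⟨i, rfl⟩
    · rw [hCtree e ht]; exact hmem e ht
    · rw [hCcyc i]
      exact (hcycmem' i).1
  · intro e he f hf hef hshare
    rcases hclass e he with hte | ⟨i, hei⟩
    · rcases hclass f hf with htf | ⟨j, hfj⟩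
      · rw [hCtree e hte, hCtree f htf]
        exact hprop e hte f htf hef hshare
      · subst hfj
        rw [hCtree e hte, hCcyc j]
        exact hmix j e hte hshare
    · subst hei
      rcases hclass f hf with htf | ⟨j, hfj⟩
      · rw [hCcyc i, hCtree f htf]
        exact fun h => (hmix i f htf (by
          obtain ⟨v, h1, h2⟩ := hshare
          exact ⟨v, h2, h1⟩)) h.symm
      · subst hfj
        rw [hCcyc i, hCcyc j]
        have hij : i ≠ j := fun h => hef (by rw [h])
        obtain ⟨v, hvi, hvj⟩ := hshare
        have h1 : v = σ i ∨ v = σ (i+1) := by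
          simp only [hcycE, Sym2.mem_iff] at hvi; exact hvi
        have h2 : v = σ j ∨ v = σ (j+1) := by
          simp only [hcycE, Sym2.mem_iff] at hvj; exact hvj
        rcases h1 with h1 | h1 <;> rcases h2 with h2 | h2
        · exact absurd (hinj (h1.symm.trans h2)) hij
        · have hh : i = j + 1 := hinj (h1.symm.trans h2)
          rw [hh]
          exact (hcycne j).symm
        · have hh : j = i + 1 := hinj (h2.symm.trans h1)
          rw [hh]
          exact hcycne i
        · have hh : i = j := add_right_cancel (hinj (h1.symm.trans h2))
          exact absurd hh hij
end

section
/- Consider the graph H with vertices w₀, w₁, w₂, w₃, w₄ and edges w₀w₁, w₀w₂, w₀w₃, w₁w₂, w₁w₃, w₁w₄, together with a list assignment L where |L(w₀w₁)| ≥ 5, |L(w₀w₂)|, |L(w₀w₃)|, |L(w₁w₂)|, |L(w₁w₃)| ≥ 3, and |L(w₁w₄)| ≥ 2. Then H has a proper edge colouring from the lists. -/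
/-- The graph with vertices `w₀ = 0, …, w₄ = 4` and edges
`w₀w₁, w₀w₂, w₀w₃, w₁w₂, w₁w₃, w₁w₄`. -/
def configGraphTW3 : SimpleGraph (Fin 5) :=
  SimpleGraph.fromEdgeSet {s(0, 1), s(0, 2), s(0, 3), s(1, 2), s(1, 3), s(1, 4)}

lemma exists_avoid_tw3 (S T : Finset ℕ) (h : T.card < S.card) : ∃ x ∈ S, x ∉ T := by
  by_contra hx
  push_neg at hx
  exact absurd (Finset.card_le_card hx) (not_le.mpr h)

lemma avoid1_tw3 (S : Finset ℕ) (h : 2 ≤ S.card) (w : ℕ) : ∃ x ∈ S, x ≠ w := by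
  obtain ⟨x, hx, hx'⟩ := exists_avoid_tw3 S {w} (by rw [Finset.card_singleton]; omega)
  exact ⟨x, hx, by simpa using hx'⟩

lemma avoid2_tw3 (S : Finset ℕ) (h : 3 ≤ S.card) (w x : ℕ) :
    ∃ v ∈ S, v ≠ w ∧ v ≠ x := by
  have hT : ({w, x} : Finset ℕ).card ≤ 2 := (Finset.card_insert_le _ _).trans (by simp)
  obtain ⟨v, hv, hv'⟩ := exists_avoid_tw3 S {w, x} (by omega)
  exact ⟨v, hv, by simpa using hv'⟩

lemma avoid4_tw3 (S : Finset ℕ) (h : 5 ≤ S.card) (w x y z : ℕ) :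
    ∃ v ∈ S, v ≠ w ∧ v ≠ x ∧ v ≠ y ∧ v ≠ z := by
  have hT : ({w, x, y, z} : Finset ℕ).card ≤ 4 :=
    (Finset.card_insert_le _ _).trans (Nat.succ_le_succ ((Finset.card_insert_le _ _).trans
      (Nat.succ_le_succ ((Finset.card_insert_le _ _).trans (by simp)))))
  obtain ⟨v, hv, hv'⟩ := exists_avoid_tw3 S {w, x, y, z} (lt_of_le_of_lt hT (by omega))
  refine ⟨v, hv, ?_⟩
  simp only [Finset.mem_insert, Finset.mem_singleton, not_or] at hv'
  tauto

lemma mem_configEdge_tw3 {x : Sym2 (Fin 5)} (hx : x ∈ configGraphTW3.edgeSet) :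
    x = s(0,1) ∨ x = s(0,2) ∨ x = s(0,3) ∨ x = s(1,2) ∨ x = s(1,3) ∨ x = s(1,4) := by
  rw [configGraphTW3, SimpleGraph.edgeSet_fromEdgeSet] at hx
  simpa using hx.1

lemma master_tw3 (L : Sym2 (Fin 5) → Finset ℕ) (a b c d e f : ℕ)
    (ha : a ∈ L s(0,1)) (hb : b ∈ L s(0,2)) (hc : c ∈ L s(0,3))
    (hd : d ∈ L s(1,2)) (he : e ∈ L s(1,3)) (hf : f ∈ L s(1,4))
    (hab : a ≠ b) (hac : a ≠ c) (had : a ≠ d) (hae : a ≠ e) (haf : a ≠ f)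
    (hbc : b ≠ c) (hbd : b ≠ d) (hce : c ≠ e) (hde : d ≠ e) (hdf : d ≠ f) (hef : e ≠ f) :
    ∃ C, IsListEdgeColoring configGraphTW3 L C := by
  refine ⟨fun x => if x = s(0,1) then a else if x = s(0,2) then b else if x = s(0,3) then c
      else if x = s(1,2) then d else if x = s(1,3) then e else f, ?_, ?_⟩
  · intro x hx
    rcases mem_configEdge_tw3 hx with rfl|rfl|rfl|rfl|rfl|rfl <;>
      simp only [if_pos, if_neg, reduceIte] <;> norm_num <;> assumption
  · intro x hx y hy hne hshare
    rcases mem_configEdge_tw3 hx with rfl|rfl|rfl|rfl|rfl|rfl <;>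
      rcases mem_configEdge_tw3 hy with rfl|rfl|rfl|rfl|rfl|rfl <;>
      first
        | exact absurd rfl hne
        | exact absurd hshare (by decide)
        | (simp only [reduceIte]; first | assumption | exact Ne.symm (by assumption))

/-- The configuration arising in the proof that tree-width-3 graphs are
`(Δ+1)`-edge-choosable: if `|L(w₀w₁)| ≥ 5`, the lists of `w₀w₂, w₀w₃, w₁w₂, w₁w₃` have
size at least 3 and `|L(w₁w₄)| ≥ 2`, then the graph has an edge colouring from the
lists. -/
theorem config_tw3_list_edge_coloring (L : Sym2 (Fin 5) → Finset ℕ)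
    (h01 : 5 ≤ (L s(0, 1)).card)
    (h02 : 3 ≤ (L s(0, 2)).card) (h03 : 3 ≤ (L s(0, 3)).card)
    (h12 : 3 ≤ (L s(1, 2)).card) (h13 : 3 ≤ (L s(1, 3)).card)
    (h14 : 2 ≤ (L s(1, 4)).card) :
    ∃ C, IsListEdgeColoring configGraphTW3 L C := by
  -- shrink L(0,1) to a set A of exactly 5 colours
  obtain ⟨A, hAsub, hAcard⟩ := Finset.exists_subset_card_eq h01
  by_cases h1 : (L s(0,2) ∩ L s(1,4)).Nonempty
  · -- Case 1 : pick t ∈ L(02) ∩ L(14), set b = f = t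
    obtain ⟨t, ht⟩ := h1
    rw [Finset.mem_inter] at ht
    obtain ⟨d, hd, hdt⟩ := avoid1_tw3 (L s(1,2)) (by omega) t
    obtain ⟨e, he, het, hed⟩ := avoid2_tw3 (L s(1,3)) h13 t d
    obtain ⟨c, hc, hct, hce⟩ := avoid2_tw3 (L s(0,3)) h03 t e
    obtain ⟨a, hA, hat, hac, had, hae⟩ := avoid4_tw3 A (by omega) t c d e
    exact master_tw3 L a t c d e t (hAsub hA) ht.1 hc hd he ht.2
      hat hac had hae hat (Ne.symm hct) (Ne.symm hdt) hce (Ne.symm hed) hdt het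
  by_cases h2 : (L s(0,3) ∩ L s(1,4)).Nonempty
  · -- Case 2a : t ∈ L(03) ∩ L(14), set c = f = t
    obtain ⟨t, ht⟩ := h2
    rw [Finset.mem_inter] at ht
    obtain ⟨d, hd, hdt⟩ := avoid1_tw3 (L s(1,2)) (by omega) t
    obtain ⟨b, hb, hbt, hbd⟩ := avoid2_tw3 (L s(0,2)) h02 t d
    obtain ⟨e, he, het, hed⟩ := avoid2_tw3 (L s(1,3)) h13 t d
    obtain ⟨a, hA, hat, hab, had, hae⟩ := avoid4_tw3 A (by omega) t b d e
    exact master_tw3 L a b t d e t (hAsub hA) hb ht.1 hd he ht.2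
      hab hat had hae hat hbt hbd (Ne.symm het) (Ne.symm hed) hdt het
  by_cases h3 : (L s(0,3) ∩ L s(1,2)).Nonempty
  · -- Case 2b-i : t ∈ L(03) ∩ L(12), t ∉ L(14) since L(03) ∩ L(14) = ∅ ; c = d = t
    obtain ⟨t, ht⟩ := h3
    rw [Finset.mem_inter] at ht
    have htf : t ∉ L s(1,4) := fun hmem => h2 ⟨t, Finset.mem_inter.mpr ⟨ht.1, hmem⟩⟩
    obtain ⟨e, he, het⟩ := avoid1_tw3 (L s(1,3)) (by omega) t
    obtain ⟨f, hf, hfe⟩ := avoid1_tw3 (L s(1,4)) h14 e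
    obtain ⟨b, hb, hbt⟩ := avoid1_tw3 (L s(0,2)) (by omega) t
    obtain ⟨a, hA, hat, hab, hae, haf⟩ := avoid4_tw3 A (by omega) t b e f
    exact master_tw3 L a b t t e f (hAsub hA) hb ht.1 ht.2 he hf
      hab hat hat hae haf hbt hbt (Ne.symm het) (Ne.symm het) (fun h => htf (h ▸ hf)) (Ne.symm hfe)
  by_cases h4 : (L s(0,2) ∩ L s(1,3)).Nonempty
  · -- Case 2b-ii : t ∈ L(02) ∩ L(13), t ∉ L(14) since L(02) ∩ L(14) = ∅ ; b = e = t
    obtain ⟨t, ht⟩ := h4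
    rw [Finset.mem_inter] at ht
    have htf : t ∉ L s(1,4) := fun hmem => h1 ⟨t, Finset.mem_inter.mpr ⟨ht.1, hmem⟩⟩
    obtain ⟨d, hd, hdt⟩ := avoid1_tw3 (L s(1,2)) (by omega) t
    obtain ⟨f, hf, hfd⟩ := avoid1_tw3 (L s(1,4)) h14 d
    obtain ⟨c, hc, hct⟩ := avoid1_tw3 (L s(0,3)) (by omega) t
    obtain ⟨a, hA, hat, hac, had, haf⟩ := avoid4_tw3 A (by omega) t c d f
    exact master_tw3 L a t c d t f (hAsub hA) ht.1 hc hd ht.2 hf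
      hat hac had hat haf (Ne.symm hct) (Ne.symm hdt) hct hdt (Ne.symm hfd)
      (fun h => htf (h ▸ hf))
  -- Case 2b-iii : L(03) ∩ L(12) = ∅, so not both can fit inside A (card 5)
  have hnot : ¬ (L s(0,3) ⊆ A) ∨ ¬ (L s(1,2) ⊆ A) := by
    by_contra hcon
    push_neg at hcon
    have hdisj : Disjoint (L s(0,3)) (L s(1,2)) :=
      Finset.disjoint_left.mpr fun x hx hx' =>
        h3 ⟨x, Finset.mem_inter.mpr ⟨hx, hx'⟩⟩
    have hsub : L s(0,3) ∪ L s(1,2) ⊆ A := Finset.union_subset hcon.1 hcon.2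
    have := Finset.card_le_card hsub
    rw [Finset.card_union_of_disjoint hdisj, hAcard] at this
    omega
  rcases hnot with hC | hD
  · -- α : t ∈ L(03) \ A, set c = t
    obtain ⟨t, htC, htA⟩ := Finset.not_subset.mp hC
    obtain ⟨f, hf⟩ := Finset.card_pos.mp (by omega : 0 < (L s(1,4)).card)
    obtain ⟨e, he, het, hef⟩ := avoid2_tw3 (L s(1,3)) h13 t f
    obtain ⟨d, hd, hde, hdf⟩ := avoid2_tw3 (L s(1,2)) h12 e f
    obtain ⟨b, hb, hbt, hbd⟩ := avoid2_tw3 (L s(0,2)) h02 t d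
    obtain ⟨a, hA, hab, had, hae, haf⟩ := avoid4_tw3 A (by omega) b d e f
    exact master_tw3 L a b t d e f (hAsub hA) hb htC hd he hf
      hab (fun h => htA (h ▸ hA)) had hae haf hbt hbd (Ne.symm het) hde hdf hef
  · -- β : t ∈ L(12) \ A, set d = t
    obtain ⟨t, htD, htA⟩ := Finset.not_subset.mp hD
    obtain ⟨f, hf, hft⟩ := avoid1_tw3 (L s(1,4)) h14 t
    obtain ⟨e, he, het, hef⟩ := avoid2_tw3 (L s(1,3)) h13 t f
    obtain ⟨c, hc, hce⟩ := avoid1_tw3 (L s(0,3)) (by omega) e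
    obtain ⟨b, hb, hbt, hbc⟩ := avoid2_tw3 (L s(0,2)) h02 t c
    obtain ⟨a, hA, hab, hac, hae, haf⟩ := avoid4_tw3 A (by omega) b c e f
    exact master_tw3 L a b c t e f (hAsub hA) hb hc htD he hf
      hab hac (fun h => htA (h ▸ hA)) hae haf hbc hbt hce (Ne.symm het) (Ne.symm hft) hef
end
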